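/- arXiv:2309.03735 — 2 statements merged into one kernel-verified Lean document; each statement's English description precedes it below -/
import Mathlib

section
/- In any (3,3)-loom (A,B) on vertex set V: |V| = 9, ν(A) = ν(B) = 3, and for any two disjoint edges e, f of A, the set V \ (e ∪ f) is an edge of A. -/
open Finset

variable {V : Type*} [DecidableEq V]

/-- The vertex set of a hypergraph: the union of its edges. -/
def vertsH (H : Set (Finset V)) : Set V := ⋃ e ∈ H, (e : Set V)

/-- `c` is a cover of the hypergraph `H`: it meets every edge. -/
def IsCoverH (H : Set (Finset V)) (c : Finset V) : Prop := ∀ e ∈ H, (c ∩ e).Nonempty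

/-- The covering number of `H` equals `k`. -/
def CoverNumIs (H : Set (Finset V)) (k : ℕ) : Prop :=
  (∃ c, IsCoverH H c ∧ c.card = k) ∧ ∀ c, IsCoverH H c → k ≤ c.card

/-- `Ck H k` is the set of covers of `H` of size exactly `k`. -/
def Ck (H : Set (Finset V)) (k : ℕ) : Set (Finset V) := {c | c.card = k ∧ IsCoverH H c}

/-- `H` is `r`-uniform. -/
def UniformH (H : Set (Finset V)) (r : ℕ) : Prop := ∀ e ∈ H, e.card = r

/-- Orthogonality of hypergraphs: every pair of edges meets in exactly one vertex. -/
def OrthH (A B : Set (Finset V)) : Prop := ∀ a ∈ A, ∀ b ∈ B, (a ∩ b).card = 1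

/-- An `(r,s)`-loom. -/
def IsLoom (r s : ℕ) (A B : Set (Finset V)) : Prop :=
  1 ≤ r ∧ 1 ≤ s ∧ OrthH A B ∧ UniformH A r ∧ UniformH B s ∧
    CoverNumIs A s ∧ CoverNumIs B r ∧ A = Ck B r ∧ B = Ck A s
/-- `M` is a matching of `H`: a set of pairwise disjoint edges of `H`. -/
def IsMatchingH (H : Set (Finset V)) (M : Finset (Finset V)) : Prop :=
  ↑M ⊆ H ∧ (M : Set (Finset V)).Pairwise (fun e f => Disjoint e f)

/-- The matching number of `H` equals `n`. -/
def MatchNumIs (H : Set (Finset V)) (n : ℕ) : Prop :=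
  (∃ M, IsMatchingH H M ∧ M.card = n) ∧ ∀ M, IsMatchingH H M → M.card ≤ n

lemma ortho_common {a b : Finset V} (h : (a ∩ b).card = 1) :
    ∃ v, v ∈ a ∧ v ∈ b ∧ ∀ x, x ∈ a → x ∈ b → x = v := by
  obtain ⟨v, hv⟩ := Finset.card_eq_one.mp h
  have hv' : v ∈ a ∩ b := by rw [hv]; exact mem_singleton_self v
  refine ⟨v, (mem_inter.mp hv').1, (mem_inter.mp hv').2, fun x hxa hxb => ?_⟩
  have : x ∈ a ∩ b := mem_inter.mpr ⟨hxa, hxb⟩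
  rw [hv] at this; exact mem_singleton.mp this

lemma eq_triple {a : Finset V} {p q r : V} (hc : a.card = 3) (hp : p ∈ a) (hq : q ∈ a)
    (hr : r ∈ a) (hpq : p ≠ q) (hpr : p ≠ r) (hqr : q ≠ r) : a = {p, q, r} := by
  have hsub : ({p, q, r} : Finset V) ⊆ a := by
    intro x hx; simp only [mem_insert, mem_singleton] at hx
    rcases hx with rfl | rfl | rfl <;> assumption
  have hcard : ({p, q, r} : Finset V).card = 3 := by
    rw [card_insert_of_notMem (by simp [hpq, hpr]), card_insert_of_notMem (by simp [hqr]),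
      card_singleton]
  exact (Finset.eq_of_subset_of_card_le hsub (by omega)).symm

lemma four_not_in_three {a : Finset V} {p q r s : V} (hc : a.card = 3) (hp : p ∈ a) (hq : q ∈ a)
    (hr : r ∈ a) (hs : s ∈ a) (h1 : p ≠ q) (h2 : p ≠ r) (h3 : p ≠ s) (h4 : q ≠ r) (h5 : q ≠ s)
    (h6 : r ≠ s) : False := by
  have hsub : ({p, q, r, s} : Finset V) ⊆ a := by
    intro x hx; simp only [mem_insert, mem_singleton] at hx
    rcases hx with rfl | rfl | rfl | rfl <;> assumption
  have hcard : ({p, q, r, s} : Finset V).card = 4 := by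
    rw [card_insert_of_notMem (by simp [h1, h2, h3]), card_insert_of_notMem (by simp [h4, h5]),
      card_insert_of_notMem (by simp [h6]), card_singleton]
  have := Finset.card_le_card hsub
  omega

lemma card_triple {V : Type*} [DecidableEq V] {x y z : V} (h1 : x ≠ y) (h2 : x ≠ z)
    (h3 : y ≠ z) : ({x, y, z} : Finset V).card = 3 := by
  rw [card_insert_of_notMem (by simp [h1, h2]), card_insert_of_notMem (by simp [h3]),
    card_singleton]

set_option maxHeartbeats 1000000 in
lemma CORE (A B : Set (Finset V))
  (horth : ∀ a ∈ A, ∀ b ∈ B, (a ∩ b).card = 1)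
  (hAcard : ∀ a ∈ A, a.card = 3) (hBcard : ∀ b ∈ B, b.card = 3)
  (avoidA : ∀ p q : V, ∃ a ∈ A, p ∉ a ∧ q ∉ a)
  (avoidB : ∀ p q : V, ∃ b ∈ B, p ∉ b ∧ q ∉ b)
  (probeA : ∀ c : Finset V, c.card = 3 → ∀ a₀ ∈ A, ∀ p q : V, p ≠ q → p ∈ c → p ∈ a₀ →
      q ∈ c → q ∈ a₀ → ∃ a ∈ A, ∀ v ∈ c, v ∉ a)
  (probeB : ∀ c : Finset V, c.card = 3 → ∀ b₀ ∈ B, ∀ p q : V, p ≠ q → p ∈ c → p ∈ b₀ →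
      q ∈ c → q ∈ b₀ → ∃ b ∈ B, ∀ v ∈ c, v ∉ b)
  (a₁ a₂ b₁ b₂ : Finset V) (ha₁ : a₁ ∈ A) (ha₂ : a₂ ∈ A) (hb₁ : b₁ ∈ B) (hb₂ : b₂ ∈ B)
  (u₁ u₂ w₁ w₂ s₁ s₂ t₁ t₂ ρ ρ' : V)
  (ea₁ : a₁ = {u₁, w₁, t₁}) (ea₂ : a₂ = {u₂, w₂, t₂})
  (eb₁ : b₁ = {u₁, u₂, s₁}) (eb₂ : b₂ = {w₁, w₂, s₂})
  (hdA : ∀ v, v ∈ a₁ → v ∈ a₂ → False) (hdB : ∀ v, v ∈ b₁ → v ∈ b₂ → False)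
  (ht₁b₁ : t₁ ∉ b₁) (ht₁b₂ : t₁ ∉ b₂) (ht₂b₁ : t₂ ∉ b₁) (ht₂b₂ : t₂ ∉ b₂)
  (hs₁a₁ : s₁ ∉ a₁) (hs₁a₂ : s₁ ∉ a₂) (hs₂a₁ : s₂ ∉ a₁) (hs₂a₂ : s₂ ∉ a₂)
  (hρa₁ : ρ ∉ a₁) (hρa₂ : ρ ∉ a₂) (hρb₁ : ρ ∉ b₁) (hρb₂ : ρ ∉ b₂)
  (hρ'a₁ : ρ' ∉ a₁) (hρ'a₂ : ρ' ∉ a₂) (hρ'b₁ : ρ' ∉ b₁) (hρ'b₂ : ρ' ∉ b₂)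
  (hρρ' : ρ ≠ ρ')
  (hAρ : ∃ a ∈ A, ρ ∈ a) (hAρ' : ∃ a ∈ A, ρ' ∈ a) (hBρ' : ∃ b ∈ B, ρ' ∈ b)
  (bs : Finset V) (hbs : bs ∈ B) (hbst : t₁ ∈ bs) (hbsu : u₂ ∈ bs) (hbsρ : ρ ∈ bs) : False := by
  -- memberships
  have hu₁a₁ : u₁ ∈ a₁ := by rw [ea₁]; simp
  have hw₁a₁ : w₁ ∈ a₁ := by rw [ea₁]; simp
  have ht₁a₁ : t₁ ∈ a₁ := by rw [ea₁]; simp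
  have hu₂a₂ : u₂ ∈ a₂ := by rw [ea₂]; simp
  have hw₂a₂ : w₂ ∈ a₂ := by rw [ea₂]; simp
  have ht₂a₂ : t₂ ∈ a₂ := by rw [ea₂]; simp
  have hu₁b₁ : u₁ ∈ b₁ := by rw [eb₁]; simp
  have hu₂b₁ : u₂ ∈ b₁ := by rw [eb₁]; simp
  have hs₁b₁ : s₁ ∈ b₁ := by rw [eb₁]; simp
  have hw₁b₂ : w₁ ∈ b₂ := by rw [eb₂]; simp
  have hw₂b₂ : w₂ ∈ b₂ := by rw [eb₂]; simp
  have hs₂b₂ : s₂ ∈ b₂ := by rw [eb₂]; simp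
  -- cross non-memberships
  have hu₁a₂ : u₁ ∉ a₂ := fun h => hdA u₁ hu₁a₁ h
  have hw₁a₂ : w₁ ∉ a₂ := fun h => hdA w₁ hw₁a₁ h
  have ht₁a₂ : t₁ ∉ a₂ := fun h => hdA t₁ ht₁a₁ h
  have hu₂a₁ : u₂ ∉ a₁ := fun h => hdA u₂ h hu₂a₂
  have hw₂a₁ : w₂ ∉ a₁ := fun h => hdA w₂ h hw₂a₂
  have ht₂a₁ : t₂ ∉ a₁ := fun h => hdA t₂ h ht₂a₂
  have hu₁b₂ : u₁ ∉ b₂ := fun h => hdB u₁ hu₁b₁ h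
  have hu₂b₂ : u₂ ∉ b₂ := fun h => hdB u₂ hu₂b₁ h
  have hs₁b₂ : s₁ ∉ b₂ := fun h => hdB s₁ hs₁b₁ h
  have hw₁b₁ : w₁ ∉ b₁ := fun h => hdB w₁ h hw₁b₂
  have hw₂b₁ : w₂ ∉ b₁ := fun h => hdB w₂ h hw₂b₂
  have hs₂b₁ : s₂ ∉ b₁ := fun h => hdB s₂ h hs₂b₂
  -- distinctness
  have d1 : u₁ ≠ u₂ := fun h => hu₁a₂ (h ▸ hu₂a₂)
  have d2 : u₁ ≠ w₁ := fun h => hw₁b₁ (h ▸ hu₁b₁)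
  have d3 : u₁ ≠ w₂ := fun h => hw₂b₁ (h ▸ hu₁b₁)
  have d4 : u₁ ≠ s₁ := fun h => hs₁a₁ (h ▸ hu₁a₁)
  have d5 : u₁ ≠ s₂ := fun h => hs₂b₁ (h ▸ hu₁b₁)
  have d6 : u₁ ≠ t₁ := fun h => ht₁b₁ (h ▸ hu₁b₁)
  have d7 : u₁ ≠ t₂ := fun h => ht₂b₁ (h ▸ hu₁b₁)
  have d8 : u₁ ≠ ρ := fun h => hρb₁ (h ▸ hu₁b₁)
  have d9 : u₁ ≠ ρ' := fun h => hρ'b₁ (h ▸ hu₁b₁)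
  have d10 : u₂ ≠ w₁ := fun h => hw₁b₁ (h ▸ hu₂b₁)
  have d11 : u₂ ≠ w₂ := fun h => hw₂b₁ (h ▸ hu₂b₁)
  have d12 : u₂ ≠ s₁ := fun h => hs₁a₂ (h ▸ hu₂a₂)
  have d13 : u₂ ≠ s₂ := fun h => hs₂b₁ (h ▸ hu₂b₁)
  have d14 : u₂ ≠ t₁ := fun h => ht₁b₁ (h ▸ hu₂b₁)
  have d15 : u₂ ≠ t₂ := fun h => ht₂b₁ (h ▸ hu₂b₁)
  have d16 : u₂ ≠ ρ := fun h => hρb₁ (h ▸ hu₂b₁)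
  have d17 : u₂ ≠ ρ' := fun h => hρ'b₁ (h ▸ hu₂b₁)
  have d18 : w₁ ≠ w₂ := fun h => hw₁a₂ (h ▸ hw₂a₂)
  have d19 : w₁ ≠ s₁ := fun h => hs₁b₂ (h ▸ hw₁b₂)
  have d20 : w₁ ≠ s₂ := fun h => hs₂a₁ (h ▸ hw₁a₁)
  have d21 : w₁ ≠ t₁ := fun h => ht₁b₂ (h ▸ hw₁b₂)
  have d22 : w₁ ≠ t₂ := fun h => ht₂b₂ (h ▸ hw₁b₂)
  have d23 : w₁ ≠ ρ := fun h => hρb₂ (h ▸ hw₁b₂)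
  have d24 : w₁ ≠ ρ' := fun h => hρ'b₂ (h ▸ hw₁b₂)
  have d25 : w₂ ≠ s₁ := fun h => hs₁b₂ (h ▸ hw₂b₂)
  have d26 : w₂ ≠ s₂ := fun h => hs₂a₂ (h ▸ hw₂a₂)
  have d27 : w₂ ≠ t₁ := fun h => ht₁b₂ (h ▸ hw₂b₂)
  have d28 : w₂ ≠ t₂ := fun h => ht₂b₂ (h ▸ hw₂b₂)
  have d29 : w₂ ≠ ρ := fun h => hρb₂ (h ▸ hw₂b₂)
  have d30 : w₂ ≠ ρ' := fun h => hρ'b₂ (h ▸ hw₂b₂)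
  have d31 : s₁ ≠ s₂ := fun h => hs₁b₂ (h ▸ hs₂b₂)
  have d32 : s₁ ≠ t₁ := fun h => ht₁b₁ (h ▸ hs₁b₁)
  have d33 : s₁ ≠ t₂ := fun h => ht₂b₁ (h ▸ hs₁b₁)
  have d34 : s₁ ≠ ρ := fun h => hρb₁ (h ▸ hs₁b₁)
  have d35 : s₁ ≠ ρ' := fun h => hρ'b₁ (h ▸ hs₁b₁)
  have d36 : s₂ ≠ t₁ := fun h => ht₁b₂ (h ▸ hs₂b₂)
  have d37 : s₂ ≠ t₂ := fun h => ht₂b₂ (h ▸ hs₂b₂)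
  have d38 : s₂ ≠ ρ := fun h => hρb₂ (h ▸ hs₂b₂)
  have d39 : s₂ ≠ ρ' := fun h => hρ'b₂ (h ▸ hs₂b₂)
  have d40 : t₁ ≠ t₂ := fun h => ht₁a₂ (h ▸ ht₂a₂)
  have d41 : t₁ ≠ ρ := fun h => hρa₁ (h ▸ ht₁a₁)
  have d42 : t₁ ≠ ρ' := fun h => hρ'a₁ (h ▸ ht₁a₁)
  have d43 : t₂ ≠ ρ := fun h => hρa₂ (h ▸ ht₂a₂)
  have d44 : t₂ ≠ ρ' := fun h => hρ'a₂ (h ▸ ht₂a₂)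
  -- helpers
  have cm : ∀ {a b : Finset V}, a ∈ A → b ∈ B →
      ∃ v, v ∈ a ∧ v ∈ b ∧ ∀ x, x ∈ a → x ∈ b → x = v :=
    fun ha hb => ortho_common (horth _ ha _ hb)
  have n2 : ∀ {a b : Finset V}, a ∈ A → b ∈ B → ∀ p q, p ∈ a → p ∈ b → q ∈ a → q ∈ b → p = q := by
    intro a b ha hb p q hp1 hp2 hq1 hq2
    obtain ⟨v, _, _, hu⟩ := cm ha hb
    exact (hu p hp1 hp2).trans (hu q hq1 hq2).symm
  have tun : ∀ {a : Finset V}, a ∈ A → ∀ p q, p ∈ a → p ∉ b₁ → p ∉ b₂ → q ∈ a → q ∉ b₁ →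
      q ∉ b₂ → p = q := by
    intro a ha p q hp hp1 hp2 hq hq1 hq2
    by_contra hne
    obtain ⟨u, hua, hub, -⟩ := cm ha hb₁
    obtain ⟨w, hwa, hwb, -⟩ := cm ha hb₂
    exact four_not_in_three (hAcard a ha) hp hq hua hwa hne (fun h => hp1 (h ▸ hub))
      (fun h => hp2 (h ▸ hwb)) (fun h => hq1 (h ▸ hub)) (fun h => hq2 (h ▸ hwb))
      (fun h => hdB w (h ▸ hub) hwb)
  have sun : ∀ {b : Finset V}, b ∈ B → ∀ p q, p ∈ b → p ∉ a₁ → p ∉ a₂ → q ∈ b → q ∉ a₁ →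
      q ∉ a₂ → p = q := by
    intro b hb p q hp hp1 hp2 hq hq1 hq2
    by_contra hne
    obtain ⟨x, hxa, hxb, -⟩ := cm ha₁ hb
    obtain ⟨y, hya, hyb, -⟩ := cm ha₂ hb
    exact four_not_in_three (hBcard b hb) hp hq hxb hyb hne (fun h => hp1 (h ▸ hxa))
      (fun h => hp2 (h ▸ hya)) (fun h => hq1 (h ▸ hxa)) (fun h => hq2 (h ▸ hya))
      (fun h => hdA y (h ▸ hxa) hya)
  have ebs : bs = {t₁, u₂, ρ} := eq_triple (hBcard bs hbs) hbst hbsu hbsρ d14.symm d41 d16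

  -- c0 : edges through ρ avoid u₂ and t₁
  have c0 : ∀ a ∈ A, ρ ∈ a → u₂ ∉ a ∧ t₁ ∉ a := by
    intro a ha hρa
    constructor
    · intro hu₂a
      exact d16 (n2 ha hbs u₂ ρ hu₂a hbsu hρa hbsρ)
    · intro ht₁a
      exact d41 (n2 ha hbs t₁ ρ ht₁a hbst hρa hbsρ)
  -- c1 : A-edges through ρ' contain u₂
  have c1 : ∀ a ∈ A, ρ' ∈ a → u₂ ∈ a := by
    intro a ha hρ'a
    obtain ⟨v, hva, hvb, -⟩ := cm ha hbs
    rw [ebs] at hvb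
    simp only [mem_insert, mem_singleton] at hvb
    rcases hvb with h | h | h <;> rw [h] at hva
    · exact absurd (tun ha t₁ ρ' hva ht₁b₁ ht₁b₂ hρ'a hρ'b₁ hρ'b₂) d42
    · exact hva
    · exact absurd (tun ha ρ ρ' hva hρb₁ hρb₂ hρ'a hρ'b₁ hρ'b₂) hρρ'
  -- c2 : B-edges through ρ' contain w₂
  have c2 : ∀ b ∈ B, ρ' ∈ b → w₂ ∈ b := by
    intro b hb hρ'b
    obtain ⟨v, hva, hvb, -⟩ := cm ha₂ hb
    rw [ea₂] at hva
    simp only [mem_insert, mem_singleton] at hva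
    rcases hva with h | h | h <;> rw [h] at hvb
    · obtain ⟨a', ha', hρ'a'⟩ := hAρ'
      exact absurd (n2 ha' hb u₂ ρ' (c1 a' ha' hρ'a') hvb hρ'a' hρ'b) d17
    · exact hvb
    · exfalso
      obtain ⟨x, hxa, hxb, -⟩ := cm ha₁ hb
      rw [ea₁] at hxa
      simp only [mem_insert, mem_singleton] at hxa
      rcases hxa with h2 | h2 | h2 <;> rw [h2] at hxb
      · obtain ⟨aX, haX, haX1, haX2⟩ := avoidA u₂ u₁
        obtain ⟨v₁, hv₁a, hv₁b, -⟩ := cm haX hbs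
        rw [ebs] at hv₁b; simp only [mem_insert, mem_singleton] at hv₁b
        have eb : b = {u₁, t₂, ρ'} := eq_triple (hBcard b hb) hxb hvb hρ'b d7 d9 d44
        obtain ⟨v₂, hv₂a, hv₂b, -⟩ := cm haX hb
        rw [eb] at hv₂b; simp only [mem_insert, mem_singleton] at hv₂b
        rcases hv₂b with h3 | h3 | h3 <;> rw [h3] at hv₂a
        · exact haX2 hv₂a
        · rcases hv₁b with h4 | h4 | h4 <;> rw [h4] at hv₁a
          · exact d40 (tun haX t₁ t₂ hv₁a ht₁b₁ ht₁b₂ hv₂a ht₂b₁ ht₂b₂)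
          · exact haX1 hv₁a
          · exact d43 (tun haX t₂ ρ hv₂a ht₂b₁ ht₂b₂ hv₁a hρb₁ hρb₂)
        · rcases hv₁b with h4 | h4 | h4 <;> rw [h4] at hv₁a
          · exact d42 (tun haX t₁ ρ' hv₁a ht₁b₁ ht₁b₂ hv₂a hρ'b₁ hρ'b₂)
          · exact haX1 hv₁a
          · exact hρρ' (tun haX ρ ρ' hv₁a hρb₁ hρb₂ hv₂a hρ'b₁ hρ'b₂)
      · obtain ⟨aX, haX, haX1, haX2⟩ := avoidA u₂ w₁
        obtain ⟨v₁, hv₁a, hv₁b, -⟩ := cm haX hbs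
        rw [ebs] at hv₁b; simp only [mem_insert, mem_singleton] at hv₁b
        have eb : b = {w₁, t₂, ρ'} := eq_triple (hBcard b hb) hxb hvb hρ'b d22 d24 d44
        obtain ⟨v₂, hv₂a, hv₂b, -⟩ := cm haX hb
        rw [eb] at hv₂b; simp only [mem_insert, mem_singleton] at hv₂b
        rcases hv₂b with h3 | h3 | h3 <;> rw [h3] at hv₂a
        · exact haX2 hv₂a
        · rcases hv₁b with h4 | h4 | h4 <;> rw [h4] at hv₁a
          · exact d40 (tun haX t₁ t₂ hv₁a ht₁b₁ ht₁b₂ hv₂a ht₂b₁ ht₂b₂)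
          · exact haX1 hv₁a
          · exact d43 (tun haX t₂ ρ hv₂a ht₂b₁ ht₂b₂ hv₁a hρb₁ hρb₂)
        · rcases hv₁b with h4 | h4 | h4 <;> rw [h4] at hv₁a
          · exact d42 (tun haX t₁ ρ' hv₁a ht₁b₁ ht₁b₂ hv₂a hρ'b₁ hρ'b₂)
          · exact haX1 hv₁a
          · exact hρρ' (tun haX ρ ρ' hv₁a hρb₁ hρb₂ hv₂a hρ'b₁ hρ'b₂)
      · obtain ⟨a0, ha0, hρa0⟩ := hAρ
        have eb : b = {t₁, t₂, ρ'} := eq_triple (hBcard b hb) hxb hvb hρ'b d40 d42 d44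
        obtain ⟨v₂, hv₂a, hv₂b, -⟩ := cm ha0 hb
        rw [eb] at hv₂b; simp only [mem_insert, mem_singleton] at hv₂b
        rcases hv₂b with h3 | h3 | h3 <;> rw [h3] at hv₂a
        · exact (c0 a0 ha0 hρa0).2 hv₂a
        · exact d43 (tun ha0 t₂ ρ hv₂a ht₂b₁ ht₂b₂ hρa0 hρb₁ hρb₂)
        · exact hρρ' (tun ha0 ρ ρ' hρa0 hρb₁ hρb₂ hv₂a hρ'b₁ hρ'b₂)
  -- c3 : A-edges through ρ' avoid w₂ and contain w₁ or s₂
  obtain ⟨b'0, hb'0, hρ'b'0⟩ := hBρ'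
  have hw₂b'0 := c2 b'0 hb'0 hρ'b'0
  have c3 : ∀ a ∈ A, ρ' ∈ a → w₂ ∉ a ∧ (w₁ ∈ a ∨ s₂ ∈ a) := by
    intro a ha hρ'a
    have hw₂na : w₂ ∉ a := fun hw₂a => d30 (n2 ha hb'0 w₂ ρ' hw₂a hw₂b'0 hρ'a hρ'b'0)
    refine ⟨hw₂na, ?_⟩
    obtain ⟨v, hva, hvb, -⟩ := cm ha hb₂
    rw [eb₂] at hvb; simp only [mem_insert, mem_singleton] at hvb
    rcases hvb with h | h | h <;> rw [h] at hva
    · exact Or.inl hva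
    · exact absurd hva hw₂na
    · exact Or.inr hva
  -- main case split
  by_cases hsig : ∃ a ∈ A, ρ' ∈ a ∧ s₂ ∈ a
  · -- CASE 2.A : some A-edge through ρ' contains s₂
    obtain ⟨as2, has2, hρ'as2, hs₂as2⟩ := hsig
    have hu₂as2 := c1 as2 has2 hρ'as2
    have eas2 : as2 = {u₂, s₂, ρ'} :=
      eq_triple (hAcard as2 has2) hu₂as2 hs₂as2 hρ'as2 d13 d17 d39
    -- g1 : no A-edge through ρ contains both s₁ and w₂
    have g1 : ∀ a ∈ A, ρ ∈ a → s₁ ∈ a → w₂ ∈ a → False := by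
      intro a ha hρa hs₁a hw₂a
      obtain ⟨bb, hbb, hbb1, hbb2⟩ := avoidB w₂ u₂
      have ea : a = {s₁, w₂, ρ} := eq_triple (hAcard a ha) hs₁a hw₂a hρa d25.symm d34 d29
      obtain ⟨v, hva, hvb, -⟩ := cm ha hbb
      rw [ea] at hva; simp only [mem_insert, mem_singleton] at hva
      obtain ⟨v2, hv2a, hv2b, -⟩ := cm has2 hbb
      rw [eas2] at hv2a; simp only [mem_insert, mem_singleton] at hv2a
      rcases hva with h | h | h <;> rw [h] at hvb
      · rcases hv2a with h2 | h2 | h2 <;> rw [h2] at hv2b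
        · exact hbb2 hv2b
        · exact d31 (sun hbb s₁ s₂ hvb hs₁a₁ hs₁a₂ hv2b hs₂a₁ hs₂a₂)
        · exact d35 (sun hbb s₁ ρ' hvb hs₁a₁ hs₁a₂ hv2b hρ'a₁ hρ'a₂)
      · exact hbb1 hvb
      · rcases hv2a with h2 | h2 | h2 <;> rw [h2] at hv2b
        · exact hbb2 hv2b
        · exact d38 (sun hbb s₂ ρ hv2b hs₂a₁ hs₂a₂ hvb hρa₁ hρa₂)
        · exact hρρ' (sun hbb ρ ρ' hvb hρa₁ hρa₂ hv2b hρ'a₁ hρ'a₂)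
    by_cases ht : ∃ b ∈ B, ρ' ∈ b ∧ t₁ ∈ b
    · -- 2.A.I
      obtain ⟨bq1, hbq1, hρ'bq1, ht₁bq1⟩ := ht
      have hw₂bq1 := c2 bq1 hbq1 hρ'bq1
      have ebq1 : bq1 = {t₁, w₂, ρ'} :=
        eq_triple (hBcard bq1 hbq1) ht₁bq1 hw₂bq1 hρ'bq1 d27.symm d42 d30
      have st1 : ∀ a ∈ A, ρ ∈ a → w₂ ∈ a := by
        intro a ha hρa
        obtain ⟨v, hva, hvb, -⟩ := cm ha hbq1
        rw [ebq1] at hvb; simp only [mem_insert, mem_singleton] at hvb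
        rcases hvb with h | h | h <;> rw [h] at hva
        · exact absurd hva (c0 a ha hρa).2
        · exact hva
        · exact absurd (tun ha ρ ρ' hρa hρb₁ hρb₂ hva hρ'b₁ hρ'b₂) hρρ'
      have st2 : ∀ a ∈ A, ρ ∈ a → u₁ ∈ a := by
        intro a ha hρa
        obtain ⟨v, hva, hvb, -⟩ := cm ha hb₁
        rw [eb₁] at hvb; simp only [mem_insert, mem_singleton] at hvb
        rcases hvb with h | h | h <;> rw [h] at hva
        · exact hva
        · exact absurd hva (c0 a ha hρa).1
        · exact absurd (st1 a ha hρa) (fun hw => g1 a ha hρa hva hw)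
      obtain ⟨a0, ha0, hρa0⟩ := hAρ
      have ea0 : a0 = {u₁, w₂, ρ} :=
        eq_triple (hAcard a0 ha0) (st2 a0 ha0 hρa0) (st1 a0 ha0 hρa0) hρa0 d3 d8 d29
      obtain ⟨bp, hbpB, hbpn⟩ := probeB {u₁, u₂, w₂} (card_triple d1 d3 d11) b₁ hb₁ u₁ u₂ d1
        (by simp) hu₁b₁ (by simp) hu₂b₁
      have hp1 : u₁ ∉ bp := hbpn u₁ (by simp)
      have hp2 : u₂ ∉ bp := hbpn u₂ (by simp)
      have hp3 : w₂ ∉ bp := hbpn w₂ (by simp)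
      obtain ⟨v, hva, hvb, -⟩ := cm ha0 hbpB
      rw [ea0] at hva; simp only [mem_insert, mem_singleton] at hva
      rcases hva with h | h | h <;> rw [h] at hvb
      · exact hp1 hvb
      · exact hp3 hvb
      · obtain ⟨v2, hv2a, hv2b, -⟩ := cm has2 hbpB
        rw [eas2] at hv2a; simp only [mem_insert, mem_singleton] at hv2a
        rcases hv2a with h2 | h2 | h2 <;> rw [h2] at hv2b
        · exact hp2 hv2b
        · exact d38 (sun hbpB s₂ ρ hv2b hs₂a₁ hs₂a₂ hvb hρa₁ hρa₂)
        · exact hρρ' (sun hbpB ρ ρ' hvb hρa₁ hρa₂ hv2b hρ'a₁ hρ'a₂)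
    · by_cases hus : ∃ b ∈ B, ρ' ∈ b ∧ u₁ ∈ b
      · -- 2.A.II.u
        obtain ⟨bq1, hbq1, hρ'bq1, hu₁bq1⟩ := hus
        have hw₂bq1 := c2 bq1 hbq1 hρ'bq1
        have ebq1 : bq1 = {u₁, w₂, ρ'} :=
          eq_triple (hBcard bq1 hbq1) hu₁bq1 hw₂bq1 hρ'bq1 d3 d9 d30
        have d5f : ∀ a ∈ A, ρ ∈ a → (u₁ ∈ a ∨ w₂ ∈ a) ∧ ¬(u₁ ∈ a ∧ w₂ ∈ a) := by
          intro a ha hρa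
          constructor
          · obtain ⟨v, hva, hvb, -⟩ := cm ha hbq1
            rw [ebq1] at hvb; simp only [mem_insert, mem_singleton] at hvb
            rcases hvb with h | h | h <;> rw [h] at hva
            · exact Or.inl hva
            · exact Or.inr hva
            · exact absurd (tun ha ρ ρ' hρa hρb₁ hρb₂ hva hρ'b₁ hρ'b₂) hρρ'
          · rintro ⟨hx, hy⟩
            exact d3 (n2 ha hbq1 u₁ w₂ hx (by rw [ebq1]; simp) hy (by rw [ebq1]; simp))
        obtain ⟨bp, hbpB, hbpn⟩ := probeB {u₁, u₂, w₁} (card_triple d1 d2 d10) b₁ hb₁ u₁ u₂ d1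
          (by simp) hu₁b₁ (by simp) hu₂b₁
        have hp1 : u₁ ∉ bp := hbpn u₁ (by simp)
        have hp2 : u₂ ∉ bp := hbpn u₂ (by simp)
        have hp3 : w₁ ∉ bp := hbpn w₁ (by simp)
        obtain ⟨x, hxa, hxb, -⟩ := cm ha₁ hbpB
        rw [ea₁] at hxa; simp only [mem_insert, mem_singleton] at hxa
        rcases hxa with h | h | h <;> rw [h] at hxb
        · exact hp1 hxb
        · exact hp3 hxb
        -- hxb : t₁ ∈ bp
        have hs₂bp : s₂ ∈ bp := by
          obtain ⟨v, hva, hvb, -⟩ := cm has2 hbpB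
          rw [eas2] at hva; simp only [mem_insert, mem_singleton] at hva
          rcases hva with h2 | h2 | h2 <;> rw [h2] at hvb
          · exact absurd hvb hp2
          · exact hvb
          · exact absurd ⟨bp, hbpB, hvb, hxb⟩ ht
        obtain ⟨y, hya, hyb, -⟩ := cm ha₂ hbpB
        rw [ea₂] at hya; simp only [mem_insert, mem_singleton] at hya
        rcases hya with h2 | h2 | h2 <;> rw [h2] at hyb
        · exact hp2 hyb
        · -- version 1 : w₂ ∈ bp
          have ebp : bp = {t₁, w₂, s₂} :=
            eq_triple (hBcard bp hbpB) hxb hyb hs₂bp d27.symm d36.symm d26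
          have stv : ∀ a ∈ A, ρ ∈ a → u₁ ∈ a ∧ s₂ ∈ a := by
            intro a ha hρa
            obtain ⟨v, hva, hvb, -⟩ := cm ha hbpB
            rw [ebp] at hvb; simp only [mem_insert, mem_singleton] at hvb
            rcases hvb with h3 | h3 | h3 <;> rw [h3] at hva
            · exact absurd hva (c0 a ha hρa).2
            · exfalso
              have hnu₁ : u₁ ∉ a := fun hu₁a => (d5f a ha hρa).2 ⟨hu₁a, hva⟩
              obtain ⟨v2, hv2a, hv2b, -⟩ := cm ha hb₁
              rw [eb₁] at hv2b; simp only [mem_insert, mem_singleton] at hv2b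
              rcases hv2b with h4 | h4 | h4 <;> rw [h4] at hv2a
              · exact hnu₁ hv2a
              · exact (c0 a ha hρa).1 hv2a
              · exact g1 a ha hρa hv2a hva
            · have hnw₂ : w₂ ∉ a := fun hw₂a =>
                d26 (n2 ha hb₂ w₂ s₂ hw₂a hw₂b₂ hva hs₂b₂)
              rcases (d5f a ha hρa).1 with h4 | h4
              · exact ⟨h4, hva⟩
              · exact absurd h4 hnw₂
          obtain ⟨a0, ha0, hρa0⟩ := hAρ
          obtain ⟨aq, haq, haqn⟩ := probeA {u₁, u₂, s₂} (card_triple d1 d5 d13) a0 ha0 u₁ s₂ d5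
            (by simp) (stv a0 ha0 hρa0).1 (by simp) (stv a0 ha0 hρa0).2
          have hq1 : u₁ ∉ aq := haqn u₁ (by simp)
          have hq2 : u₂ ∉ aq := haqn u₂ (by simp)
          obtain ⟨v, hva, hvb, -⟩ := cm haq hbs
          rw [ebs] at hvb; simp only [mem_insert, mem_singleton] at hvb
          rcases hvb with h3 | h3 | h3 <;> rw [h3] at hva
          · obtain ⟨v2, hv2a, hv2b, -⟩ := cm haq hbq1
            rw [ebq1] at hv2b; simp only [mem_insert, mem_singleton] at hv2b
            rcases hv2b with h4 | h4 | h4 <;> rw [h4] at hv2a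
            · exact hq1 hv2a
            · exact d27 (n2 haq hbpB w₂ t₁ hv2a (by rw [ebp]; simp) hva (by rw [ebp]; simp))
            · exact d42 (tun haq t₁ ρ' hva ht₁b₁ ht₁b₂ hv2a hρ'b₁ hρ'b₂)
          · exact hq2 hva
          · exact hq1 (stv aq haq hva).1
        · -- version 2 : t₂ ∈ bp
          have ebp : bp = {t₁, t₂, s₂} :=
            eq_triple (hBcard bp hbpB) hxb hyb hs₂bp d40 d36.symm d37.symm
          have stv : ∀ a ∈ A, ρ ∈ a → u₁ ∈ a ∧ s₂ ∈ a := by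
            intro a ha hρa
            obtain ⟨v, hva, hvb, -⟩ := cm ha hbpB
            rw [ebp] at hvb; simp only [mem_insert, mem_singleton] at hvb
            rcases hvb with h3 | h3 | h3 <;> rw [h3] at hva
            · exact absurd hva (c0 a ha hρa).2
            · exact absurd (tun ha t₂ ρ hva ht₂b₁ ht₂b₂ hρa hρb₁ hρb₂) d43
            · have hnw₂ : w₂ ∉ a := fun hw₂a =>
                d26 (n2 ha hb₂ w₂ s₂ hw₂a hw₂b₂ hva hs₂b₂)
              rcases (d5f a ha hρa).1 with h4 | h4
              · exact ⟨h4, hva⟩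
              · exact absurd h4 hnw₂
          obtain ⟨ca, hca, hca1, hca2⟩ := avoidA u₁ u₂
          obtain ⟨v, hva, hvb, -⟩ := cm hca hbs
          rw [ebs] at hvb; simp only [mem_insert, mem_singleton] at hvb
          rcases hvb with h3 | h3 | h3 <;> rw [h3] at hva
          · -- t₁ ∈ ca
            obtain ⟨v2, hv2a, hv2b, -⟩ := cm hca hbq1
            rw [ebq1] at hv2b; simp only [mem_insert, mem_singleton] at hv2b
            rcases hv2b with h4 | h4 | h4 <;> rw [h4] at hv2a
            · exact hca1 hv2a
            · -- w₂ ∈ ca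
              obtain ⟨v3, hv3a, hv3b, -⟩ := cm hca hb₁
              rw [eb₁] at hv3b; simp only [mem_insert, mem_singleton] at hv3b
              rcases hv3b with h5 | h5 | h5 <;> rw [h5] at hv3a
              · exact hca1 hv3a
              · exact hca2 hv3a
              · -- s₁ ∈ ca ; ca = {s₁, w₂, t₁}
                have eca : ca = {s₁, w₂, t₁} :=
                  eq_triple (hAcard ca hca) hv3a hv2a hva d25.symm d32 d27
                obtain ⟨bq, hbqB, hbqn⟩ := probeB {t₁, u₂, w₂}
                  (card_triple d14.symm d27.symm d11) bs hbs t₁ u₂ d14.symm (by simp) hbst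
                  (by simp) hbsu
                have hk1 : t₁ ∉ bq := hbqn t₁ (by simp)
                have hk2 : u₂ ∉ bq := hbqn u₂ (by simp)
                have hk3 : w₂ ∉ bq := hbqn w₂ (by simp)
                obtain ⟨v4, hv4a, hv4b, -⟩ := cm hca hbqB
                rw [eca] at hv4a; simp only [mem_insert, mem_singleton] at hv4a
                rcases hv4a with h6 | h6 | h6 <;> rw [h6] at hv4b
                · obtain ⟨v5, hv5a, hv5b, -⟩ := cm has2 hbqB
                  rw [eas2] at hv5a; simp only [mem_insert, mem_singleton] at hv5a
                  rcases hv5a with h7 | h7 | h7 <;> rw [h7] at hv5b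
                  · exact hk2 hv5b
                  · exact d31 (sun hbqB s₁ s₂ hv4b hs₁a₁ hs₁a₂ hv5b hs₂a₁ hs₂a₂)
                  · exact d35 (sun hbqB s₁ ρ' hv4b hs₁a₁ hs₁a₂ hv5b hρ'a₁ hρ'a₂)
                · exact hk3 hv4b
                · exact hk1 hv4b
            · exact d42 (tun hca t₁ ρ' hva ht₁b₁ ht₁b₂ hv2a hρ'b₁ hρ'b₂)
          · exact hca2 hva
          · exact hca1 (stv ca hca hva).1
      · -- 2.A.II.w
        have hbform : ∀ b ∈ B, ρ' ∈ b → w₁ ∈ b := by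
          intro b hb hρ'b
          obtain ⟨x, hxa, hxb, -⟩ := cm ha₁ hb
          rw [ea₁] at hxa; simp only [mem_insert, mem_singleton] at hxa
          rcases hxa with h | h | h <;> rw [h] at hxb
          · exact absurd ⟨b, hb, hρ'b, hxb⟩ hus
          · exact hxb
          · exact absurd ⟨b, hb, hρ'b, hxb⟩ ht
        have hw₁b'0 := hbform b'0 hb'0 hρ'b'0
        have eb'0 : b'0 = {w₁, w₂, ρ'} :=
          eq_triple (hBcard _ hb'0) hw₁b'0 hw₂b'0 hρ'b'0 d18 d24 d30
        have st1 : ∀ a ∈ A, ρ ∈ a → w₁ ∈ a ∨ w₂ ∈ a := by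
          intro a ha hρa
          obtain ⟨v, hva, hvb, -⟩ := cm ha hb'0
          rw [eb'0] at hvb; simp only [mem_insert, mem_singleton] at hvb
          rcases hvb with h | h | h <;> rw [h] at hva
          · exact Or.inl hva
          · exact Or.inr hva
          · exact absurd (tun ha ρ ρ' hρa hρb₁ hρb₂ hva hρ'b₁ hρ'b₂) hρρ'
        obtain ⟨bq, hbqB, hbqn⟩ := probeB {w₁, w₂, u₂} (card_triple d18 d10.symm d11.symm) b₂
          hb₂ w₁ w₂ d18 (by simp) hw₁b₂ (by simp) hw₂b₂
        have hk1 : w₁ ∉ bq := hbqn w₁ (by simp)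
        have hk2 : w₂ ∉ bq := hbqn w₂ (by simp)
        have hk3 : u₂ ∉ bq := hbqn u₂ (by simp)
        have hs₂bq : s₂ ∈ bq := by
          obtain ⟨v, hva, hvb, -⟩ := cm has2 hbqB
          rw [eas2] at hva; simp only [mem_insert, mem_singleton] at hva
          rcases hva with h | h | h <;> rw [h] at hvb
          · exact absurd hvb hk3
          · exact hvb
          · exact absurd (hbform bq hbqB hvb) hk1
        have stu : ∀ a ∈ A, ρ ∈ a → u₁ ∈ a ∧ u₁ ∈ bq := by
          intro a ha hρa
          obtain ⟨v, hva, hvb, -⟩ := cm ha hbqB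
          by_cases hv1 : v ∈ b₁
          · rw [eb₁] at hv1; simp only [mem_insert, mem_singleton] at hv1
            rcases hv1 with h | h | h <;> rw [h] at hva hvb
            · exact ⟨hva, hvb⟩
            · exact absurd hva (c0 a ha hρa).1
            · exact absurd (sun hbqB s₁ s₂ hvb hs₁a₁ hs₁a₂ hs₂bq hs₂a₁ hs₂a₂) d31
          · by_cases hv2 : v ∈ b₂
            · rw [eb₂] at hv2; simp only [mem_insert, mem_singleton] at hv2
              rcases hv2 with h | h | h <;> rw [h] at hva hvb
              · exact absurd hvb hk1
              · exact absurd hvb hk2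
              · rcases st1 a ha hρa with h4 | h4
                · exact absurd (n2 ha hb₂ s₂ w₁ hva hs₂b₂ h4 hw₁b₂) d20.symm
                · exact absurd (n2 ha hb₂ s₂ w₂ hva hs₂b₂ h4 hw₂b₂) d26.symm
            · have hvρ := tun ha v ρ hva hv1 hv2 hρa hρb₁ hρb₂
              rw [hvρ] at hvb
              exact absurd (sun hbqB ρ s₂ hvb hρa₁ hρa₂ hs₂bq hs₂a₁ hs₂a₂) d38.symm
        obtain ⟨a0, ha0, hρa0⟩ := hAρ
        have hu₁bq := (stu a0 ha0 hρa0).2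
        have ht₂bq : t₂ ∈ bq := by
          obtain ⟨v, hva, hvb, -⟩ := cm ha₂ hbqB
          rw [ea₂] at hva; simp only [mem_insert, mem_singleton] at hva
          rcases hva with h | h | h <;> rw [h] at hvb
          · exact absurd hvb hk3
          · exact absurd hvb hk2
          · exact hvb
        have ebq : bq = {u₁, t₂, s₂} :=
          eq_triple (hBcard _ hbqB) hu₁bq ht₂bq hs₂bq d7 d5 d37.symm
        obtain ⟨ca, hca, hca1, hca2⟩ := avoidA u₁ u₂
        obtain ⟨v, hva, hvb, -⟩ := cm hca hbs
        rw [ebs] at hvb; simp only [mem_insert, mem_singleton] at hvb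
        rcases hvb with h | h | h <;> rw [h] at hva
        · obtain ⟨v2, hv2a, hv2b, -⟩ := cm hca hbqB
          rw [ebq] at hv2b; simp only [mem_insert, mem_singleton] at hv2b
          rcases hv2b with h2 | h2 | h2 <;> rw [h2] at hv2a
          · exact hca1 hv2a
          · exact absurd (tun hca t₁ t₂ hva ht₁b₁ ht₁b₂ hv2a ht₂b₁ ht₂b₂) d40
          · obtain ⟨v3, hv3a, hv3b, -⟩ := cm hca hb'0
            rw [eb'0] at hv3b; simp only [mem_insert, mem_singleton] at hv3b
            rcases hv3b with h3 | h3 | h3 <;> rw [h3] at hv3a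
            · exact absurd (n2 hca hb₂ s₂ w₁ hv2a hs₂b₂ hv3a hw₁b₂) d20.symm
            · exact absurd (n2 hca hb₂ s₂ w₂ hv2a hs₂b₂ hv3a hw₂b₂) d26.symm
            · exact absurd (tun hca t₁ ρ' hva ht₁b₁ ht₁b₂ hv3a hρ'b₁ hρ'b₂) d42
        · exact hca2 hva
        · exact hca1 (stu ca hca hva).1
  · -- CASE 2.B
    push_neg at hsig
    have haform : ∀ a ∈ A, ρ' ∈ a → w₁ ∈ a := by
      intro a ha hρ'a
      rcases (c3 a ha hρ'a).2 with h | h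
      · exact h
      · exact absurd h (hsig a ha hρ'a)
    obtain ⟨a', ha', hρ'a'⟩ := hAρ'
    have hu₂a' := c1 a' ha' hρ'a'
    have hw₁a' := haform a' ha' hρ'a'
    have ea' : a' = {u₂, w₁, ρ'} := eq_triple (hAcard _ ha') hu₂a' hw₁a' hρ'a' d10 d17 d24
    by_cases hbt : ∃ b ∈ B, ρ' ∈ b ∧ t₁ ∈ b
    · -- 2.B.i
      obtain ⟨bt, hbtB, hρ'bt, ht₁bt⟩ := hbt
      have hw₂bt := c2 bt hbtB hρ'bt
      have ebt : bt = {t₁, w₂, ρ'} :=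
        eq_triple (hBcard _ hbtB) ht₁bt hw₂bt hρ'bt d27.symm d42 d30
      have st1 : ∀ a ∈ A, ρ ∈ a → w₂ ∈ a := by
        intro a ha hρa
        obtain ⟨v, hva, hvb, -⟩ := cm ha hbtB
        rw [ebt] at hvb; simp only [mem_insert, mem_singleton] at hvb
        rcases hvb with h | h | h <;> rw [h] at hva
        · exact absurd hva (c0 a ha hρa).2
        · exact hva
        · exact absurd (tun ha ρ ρ' hρa hρb₁ hρb₂ hva hρ'b₁ hρ'b₂) hρρ'
      by_cases hau : ∃ a ∈ A, ρ ∈ a ∧ u₁ ∈ a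
      · -- 2.B.i.a
        obtain ⟨au, hauA, hρau, hu₁au⟩ := hau
        have hw₂au := st1 au hauA hρau
        have eau : au = {u₁, w₂, ρ} := eq_triple (hAcard _ hauA) hu₁au hw₂au hρau d3 d8 d29
        obtain ⟨btq, hbtqB, hbtqn⟩ := probeB {u₂, w₁, t₁} (card_triple d10 d14 d21) bs hbs
          u₂ t₁ d14 (by simp) hbsu (by simp) hbst
        have hk1 : u₂ ∉ btq := hbtqn u₂ (by simp)
        have hk2 : w₁ ∉ btq := hbtqn w₁ (by simp)
        have hk3 : t₁ ∉ btq := hbtqn t₁ (by simp)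
        have hρ'btq : ρ' ∈ btq := by
          obtain ⟨v, hva, hvb, -⟩ := cm ha' hbtqB
          rw [ea'] at hva; simp only [mem_insert, mem_singleton] at hva
          rcases hva with h | h | h <;> rw [h] at hvb
          · exact absurd hvb hk1
          · exact absurd hvb hk2
          · exact hvb
        have hw₂btq := c2 btq hbtqB hρ'btq
        have hu₁btq : u₁ ∈ btq := by
          obtain ⟨v, hva, hvb, -⟩ := cm ha₁ hbtqB
          rw [ea₁] at hva; simp only [mem_insert, mem_singleton] at hva
          rcases hva with h | h | h <;> rw [h] at hvb
          · exact hvb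
          · exact absurd hvb hk2
          · exact absurd hvb hk3
        have ebtq : btq = {u₁, w₂, ρ'} :=
          eq_triple (hBcard _ hbtqB) hu₁btq hw₂btq hρ'btq d3 d9 d30
        obtain ⟨aq, haqA, haqn⟩ := probeA {u₁, u₂, w₂} (card_triple d1 d3 d11) a₂ ha₂ u₂ w₂
          d11 (by simp) hu₂a₂ (by simp) hw₂a₂
        have hq1 : u₁ ∉ aq := haqn u₁ (by simp)
        have hq2 : u₂ ∉ aq := haqn u₂ (by simp)
        have hq3 : w₂ ∉ aq := haqn w₂ (by simp)
        obtain ⟨v, hva, hvb, -⟩ := cm haqA hbs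
        rw [ebs] at hvb; simp only [mem_insert, mem_singleton] at hvb
        rcases hvb with h | h | h <;> rw [h] at hva
        · obtain ⟨v2, hv2a, hv2b, -⟩ := cm haqA hbtqB
          rw [ebtq] at hv2b; simp only [mem_insert, mem_singleton] at hv2b
          rcases hv2b with h2 | h2 | h2 <;> rw [h2] at hv2a
          · exact hq1 hv2a
          · exact hq3 hv2a
          · exact absurd (tun haqA t₁ ρ' hva ht₁b₁ ht₁b₂ hv2a hρ'b₁ hρ'b₂) d42
        · exact hq2 hva
        · exact hq3 (st1 aq haqA hva)
      · -- 2.B.i.b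
        push_neg at hau
        have sts : ∀ a ∈ A, ρ ∈ a → s₁ ∈ a := by
          intro a ha hρa
          obtain ⟨v, hva, hvb, -⟩ := cm ha hb₁
          rw [eb₁] at hvb; simp only [mem_insert, mem_singleton] at hvb
          rcases hvb with h | h | h <;> rw [h] at hva
          · exact absurd hva (hau a ha hρa)
          · exact absurd hva (c0 a ha hρa).1
          · exact hva
        obtain ⟨a0, ha0, hρa0⟩ := hAρ
        have ea0 : a0 = {s₁, w₂, ρ} :=
          eq_triple (hAcard _ ha0) (sts a0 ha0 hρa0) (st1 a0 ha0 hρa0) hρa0 d25.symm d34 d29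
        obtain ⟨bh, hbhB, hbhn⟩ := probeB {u₂, w₂, t₁} (card_triple d11 d14 d27) bs hbs
          u₂ t₁ d14 (by simp) hbsu (by simp) hbst
        have hk1 : u₂ ∉ bh := hbhn u₂ (by simp)
        have hk2 : w₂ ∉ bh := hbhn w₂ (by simp)
        have hk3 : t₁ ∉ bh := hbhn t₁ (by simp)
        have hw₁bh : w₁ ∈ bh := by
          obtain ⟨v, hva, hvb, -⟩ := cm ha' hbhB
          rw [ea'] at hva; simp only [mem_insert, mem_singleton] at hva
          rcases hva with h | h | h <;> rw [h] at hvb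
          · exact absurd hvb hk1
          · exact hvb
          · exact absurd (c2 bh hbhB hvb) hk2
        have ht₂bh : t₂ ∈ bh := by
          obtain ⟨v, hva, hvb, -⟩ := cm ha₂ hbhB
          rw [ea₂] at hva; simp only [mem_insert, mem_singleton] at hva
          rcases hva with h | h | h <;> rw [h] at hvb
          · exact absurd hvb hk1
          · exact absurd hvb hk2
          · exact hvb
        have hs₁bh : s₁ ∈ bh := by
          obtain ⟨v, hva, hvb, -⟩ := cm ha0 hbhB
          rw [ea0] at hva; simp only [mem_insert, mem_singleton] at hva
          rcases hva with h | h | h <;> rw [h] at hvb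
          · exact hvb
          · exact absurd hvb hk2
          · exfalso
            obtain ⟨caa, hcaa, hc1, hc2⟩ := avoidA w₁ w₂
            have ebh : bh = {w₁, t₂, ρ} :=
              eq_triple (hBcard _ hbhB) hw₁bh ht₂bh hvb d22 d23 d43
            obtain ⟨v2, hv2a, hv2b, -⟩ := cm hcaa hbhB
            obtain ⟨v3, hv3a, hv3b, -⟩ := cm hcaa hbtB
            rw [ebt] at hv3b; simp only [mem_insert, mem_singleton] at hv3b
            rw [ebh] at hv2b; simp only [mem_insert, mem_singleton] at hv2b
            rcases hv2b with h2 | h2 | h2 <;> rw [h2] at hv2a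
            · exact hc1 hv2a
            · rcases hv3b with h3 | h3 | h3 <;> rw [h3] at hv3a
              · exact absurd (tun hcaa t₂ t₁ hv2a ht₂b₁ ht₂b₂ hv3a ht₁b₁ ht₁b₂) d40.symm
              · exact hc2 hv3a
              · exact absurd (tun hcaa t₂ ρ' hv2a ht₂b₁ ht₂b₂ hv3a hρ'b₁ hρ'b₂) d44
            · rcases hv3b with h3 | h3 | h3 <;> rw [h3] at hv3a
              · exact absurd (tun hcaa ρ t₁ hv2a hρb₁ hρb₂ hv3a ht₁b₁ ht₁b₂) d41.symm
              · exact hc2 hv3a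
              · exact absurd (tun hcaa ρ ρ' hv2a hρb₁ hρb₂ hv3a hρ'b₁ hρ'b₂) hρρ'
        have ebh : bh = {w₁, t₂, s₁} :=
          eq_triple (hBcard _ hbhB) hw₁bh ht₂bh hs₁bh d22 d19 d33.symm
        obtain ⟨aq, haqA, haqn⟩ := probeA {s₁, w₁, w₂} (card_triple d19.symm d25.symm d18)
          a0 ha0 s₁ w₂ d25.symm (by simp) (sts a0 ha0 hρa0) (by simp) (st1 a0 ha0 hρa0)
        have hq1 : s₁ ∉ aq := haqn s₁ (by simp)
        have hq2 : w₁ ∉ aq := haqn w₁ (by simp)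
        have hq3 : w₂ ∉ aq := haqn w₂ (by simp)
        have ht₂aq : t₂ ∈ aq := by
          obtain ⟨v, hva, hvb, -⟩ := cm haqA hbhB
          rw [ebh] at hvb; simp only [mem_insert, mem_singleton] at hvb
          rcases hvb with h | h | h <;> rw [h] at hva
          · exact absurd hva hq2
          · exact hva
          · exact absurd hva hq1
        obtain ⟨v, hva, hvb, -⟩ := cm haqA hbtB
        rw [ebt] at hvb; simp only [mem_insert, mem_singleton] at hvb
        rcases hvb with h | h | h <;> rw [h] at hva
        · exact absurd (tun haqA t₁ t₂ hva ht₁b₁ ht₁b₂ ht₂aq ht₂b₁ ht₂b₂) d40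
        · exact hq3 hva
        · exact absurd (tun haqA t₂ ρ' ht₂aq ht₂b₁ ht₂b₂ hva hρ'b₁ hρ'b₂) d44
    · -- 2.B.ii
      obtain ⟨bq, hbqB, hbqn⟩ := probeB {u₁, u₂, w₁} (card_triple d1 d2 d10) b₁ hb₁ u₁ u₂ d1
        (by simp) hu₁b₁ (by simp) hu₂b₁
      have hρ'bq : ρ' ∈ bq := by
        obtain ⟨v, hva, hvb, -⟩ := cm ha' hbqB
        rw [ea'] at hva; simp only [mem_insert, mem_singleton] at hva
        rcases hva with h | h | h <;> rw [h] at hvb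
        · exact absurd hvb (hbqn u₂ (by simp))
        · exact absurd hvb (hbqn w₁ (by simp))
        · exact hvb
      obtain ⟨v, hva, hvb, -⟩ := cm ha₁ hbqB
      rw [ea₁] at hva; simp only [mem_insert, mem_singleton] at hva
      rcases hva with h | h | h <;> rw [h] at hvb
      · exact absurd hvb (hbqn u₁ (by simp))
      · exact absurd hvb (hbqn w₁ (by simp))
      · exact absurd ⟨bq, hbqB, hρ'bq, hvb⟩ hbt


set_option maxHeartbeats 1000000 in
lemma D1CASE (A B : Set (Finset V))
  (horth : ∀ a ∈ A, ∀ b ∈ B, (a ∩ b).card = 1)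
  (hAcard : ∀ a ∈ A, a.card = 3) (hBcard : ∀ b ∈ B, b.card = 3)
  (avoidA : ∀ p q : V, ∃ a ∈ A, p ∉ a ∧ q ∉ a)
  (avoidB : ∀ p q : V, ∃ b ∈ B, p ∉ b ∧ q ∉ b)
  (probeA : ∀ c : Finset V, c.card = 3 → ∀ a₀ ∈ A, ∀ p q : V, p ≠ q → p ∈ c → p ∈ a₀ →
      q ∈ c → q ∈ a₀ → ∃ a ∈ A, ∀ v ∈ c, v ∉ a)
  (probeB : ∀ c : Finset V, c.card = 3 → ∀ b₀ ∈ B, ∀ p q : V, p ≠ q → p ∈ c → p ∈ b₀ →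
      q ∈ c → q ∈ b₀ → ∃ b ∈ B, ∀ v ∈ c, v ∉ b)
  (a₁ a₂ b₁ b₂ : Finset V) (ha₁ : a₁ ∈ A) (ha₂ : a₂ ∈ A) (hb₁ : b₁ ∈ B) (hb₂ : b₂ ∈ B)
  (u₁ u₂ w₁ w₂ s₁ s₂ t₁ t₂ ρ ρ' : V)
  (ea₁ : a₁ = {u₁, w₁, t₁}) (ea₂ : a₂ = {u₂, w₂, t₂})
  (eb₁ : b₁ = {u₁, u₂, s₁}) (eb₂ : b₂ = {w₁, w₂, s₂})
  (hdA : ∀ v, v ∈ a₁ → v ∈ a₂ → False) (hdB : ∀ v, v ∈ b₁ → v ∈ b₂ → False)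
  (ht₁b₁ : t₁ ∉ b₁) (ht₁b₂ : t₁ ∉ b₂) (ht₂b₁ : t₂ ∉ b₁) (ht₂b₂ : t₂ ∉ b₂)
  (hs₁a₁ : s₁ ∉ a₁) (hs₁a₂ : s₁ ∉ a₂) (hs₂a₁ : s₂ ∉ a₁) (hs₂a₂ : s₂ ∉ a₂)
  (hρa₁ : ρ ∉ a₁) (hρa₂ : ρ ∉ a₂) (hρb₁ : ρ ∉ b₁) (hρb₂ : ρ ∉ b₂)
  (hρ'a₁ : ρ' ∉ a₁) (hρ'a₂ : ρ' ∉ a₂) (hρ'b₁ : ρ' ∉ b₁) (hρ'b₂ : ρ' ∉ b₂)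
  (hρρ' : ρ ≠ ρ')
  (hAρ : ∃ a ∈ A, ρ ∈ a) (hAρ' : ∃ a ∈ A, ρ' ∈ a) (hBρ' : ∃ b ∈ B, ρ' ∈ b)
  (b : Finset V) (hb : b ∈ B) (ht₁b : t₁ ∈ b) (hρb : ρ ∈ b) : False := by
  have hu₂a₂ : u₂ ∈ a₂ := by rw [ea₂]; simp
  have hw₂a₂ : w₂ ∈ a₂ := by rw [ea₂]; simp
  have ht₂a₂ : t₂ ∈ a₂ := by rw [ea₂]; simp
  have ht₁a₁ : t₁ ∈ a₁ := by rw [ea₁]; simp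
  have ht₁a₂ : t₁ ∉ a₂ := fun h => hdA t₁ ht₁a₁ h
  have d40 : t₁ ≠ t₂ := fun h => ht₁a₂ (h ▸ ht₂a₂)
  have d41 : t₁ ≠ ρ := fun h => hρa₁ (h ▸ ht₁a₁)
  have d43 : t₂ ≠ ρ := fun h => hρa₂ (h ▸ ht₂a₂)
  obtain ⟨v, hva, hvb, -⟩ := ortho_common (horth a₂ ha₂ b hb)
  rw [ea₂] at hva; simp only [mem_insert, mem_singleton] at hva
  rcases hva with h | h | h <;> rw [h] at hvb
  · exact CORE A B horth hAcard hBcard avoidA avoidB probeA probeB a₁ a₂ b₁ b₂ ha₁ ha₂ hb₁ hb₂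
      u₁ u₂ w₁ w₂ s₁ s₂ t₁ t₂ ρ ρ' ea₁ ea₂ eb₁ eb₂ hdA hdB ht₁b₁ ht₁b₂ ht₂b₁ ht₂b₂
      hs₁a₁ hs₁a₂ hs₂a₁ hs₂a₂ hρa₁ hρa₂ hρb₁ hρb₂ hρ'a₁ hρ'a₂ hρ'b₁ hρ'b₂ hρρ'
      hAρ hAρ' hBρ' b hb ht₁b hvb hρb
  · exact CORE A B horth hAcard hBcard avoidA avoidB probeA probeB a₁ a₂ b₂ b₁ ha₁ ha₂ hb₂ hb₁
      w₁ w₂ u₁ u₂ s₂ s₁ t₁ t₂ ρ ρ' (ea₁.trans (Finset.insert_comm _ _ _))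
      (ea₂.trans (Finset.insert_comm _ _ _)) eb₂ eb₁ hdA (fun v h1 h2 => hdB v h2 h1)
      ht₁b₂ ht₁b₁ ht₂b₂ ht₂b₁ hs₂a₁ hs₂a₂ hs₁a₁ hs₁a₂ hρa₁ hρa₂ hρb₂ hρb₁
      hρ'a₁ hρ'a₂ hρ'b₂ hρ'b₁ hρρ' hAρ hAρ' hBρ' b hb ht₁b hvb hρb
  · -- degenerate b = {t₁, t₂, ρ}
    have eb : b = {t₁, t₂, ρ} := eq_triple (hBcard b hb) ht₁b hvb hρb d40 d41 d43
    obtain ⟨ar, har, hρ'ar⟩ := hAρ'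
    have tun : ∀ p q : V, p ∈ ar → p ∉ b₁ → p ∉ b₂ → q ∈ ar → q ∉ b₁ → q ∉ b₂ → p = q := by
      intro p q hp hp1 hp2 hq hq1 hq2
      by_contra hne
      obtain ⟨u, hua, hub, -⟩ := ortho_common (horth ar har b₁ hb₁)
      obtain ⟨w, hwa, hwb, -⟩ := ortho_common (horth ar har b₂ hb₂)
      exact four_not_in_three (hAcard ar har) hp hq hua hwa hne (fun h => hp1 (h ▸ hub))
        (fun h => hp2 (h ▸ hwb)) (fun h => hq1 (h ▸ hub)) (fun h => hq2 (h ▸ hwb))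
        (fun h => hdB w (h ▸ hub) hwb)
    obtain ⟨v2, hv2a, hv2b, -⟩ := ortho_common (horth ar har b hb)
    rw [eb] at hv2b; simp only [mem_insert, mem_singleton] at hv2b
    have d42 : t₁ ≠ ρ' := fun h => hρ'a₁ (h ▸ ht₁a₁)
    have d44 : t₂ ≠ ρ' := fun h => hρ'a₂ (h ▸ ht₂a₂)
    rcases hv2b with h2 | h2 | h2 <;> rw [h2] at hv2a
    · exact d42 (tun t₁ ρ' hv2a ht₁b₁ ht₁b₂ hρ'ar hρ'b₁ hρ'b₂)
    · exact d44 (tun t₂ ρ' hv2a ht₂b₁ ht₂b₂ hρ'ar hρ'b₁ hρ'b₂)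
    · exact hρρ' (tun ρ ρ' hv2a hρb₁ hρb₂ hρ'ar hρ'b₁ hρ'b₂)

set_option maxHeartbeats 1000000 in
lemma MAIN (A B : Set (Finset V))
  (horth : ∀ a ∈ A, ∀ b ∈ B, (a ∩ b).card = 1)
  (hAcard : ∀ a ∈ A, a.card = 3) (hBcard : ∀ b ∈ B, b.card = 3)
  (avoidA : ∀ p q : V, ∃ a ∈ A, p ∉ a ∧ q ∉ a)
  (avoidB : ∀ p q : V, ∃ b ∈ B, p ∉ b ∧ q ∉ b)
  (probeA : ∀ c : Finset V, c.card = 3 → ∀ a₀ ∈ A, ∀ p q : V, p ≠ q → p ∈ c → p ∈ a₀ →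
      q ∈ c → q ∈ a₀ → ∃ a ∈ A, ∀ v ∈ c, v ∉ a)
  (probeB : ∀ c : Finset V, c.card = 3 → ∀ b₀ ∈ B, ∀ p q : V, p ≠ q → p ∈ c → p ∈ b₀ →
      q ∈ c → q ∈ b₀ → ∃ b ∈ B, ∀ v ∈ c, v ∉ b)
  (a₁ a₂ b₁ b₂ : Finset V) (ha₁ : a₁ ∈ A) (ha₂ : a₂ ∈ A) (hb₁ : b₁ ∈ B) (hb₂ : b₂ ∈ B)
  (u₁ u₂ w₁ w₂ s₁ s₂ t₁ t₂ ρ ρ' : V)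
  (ea₁ : a₁ = {u₁, w₁, t₁}) (ea₂ : a₂ = {u₂, w₂, t₂})
  (eb₁ : b₁ = {u₁, u₂, s₁}) (eb₂ : b₂ = {w₁, w₂, s₂})
  (hdA : ∀ v, v ∈ a₁ → v ∈ a₂ → False) (hdB : ∀ v, v ∈ b₁ → v ∈ b₂ → False)
  (ht₁b₁ : t₁ ∉ b₁) (ht₁b₂ : t₁ ∉ b₂) (ht₂b₁ : t₂ ∉ b₁) (ht₂b₂ : t₂ ∉ b₂)
  (hs₁a₁ : s₁ ∉ a₁) (hs₁a₂ : s₁ ∉ a₂) (hs₂a₁ : s₂ ∉ a₁) (hs₂a₂ : s₂ ∉ a₂)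
  (hρa₁ : ρ ∉ a₁) (hρa₂ : ρ ∉ a₂) (hρb₁ : ρ ∉ b₁) (hρb₂ : ρ ∉ b₂)
  (hρ'a₁ : ρ' ∉ a₁) (hρ'a₂ : ρ' ∉ a₂) (hρ'b₁ : ρ' ∉ b₁) (hρ'b₂ : ρ' ∉ b₂)
  (hρρ' : ρ ≠ ρ')
  (hAρ : ∃ a ∈ A, ρ ∈ a) (hAρ' : ∃ a ∈ A, ρ' ∈ a)
  (hBρ : ∃ b ∈ B, ρ ∈ b) (hBρ' : ∃ b ∈ B, ρ' ∈ b) : False := by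
  have hu₁a₁ : u₁ ∈ a₁ := by rw [ea₁]; simp
  have hw₁a₁ : w₁ ∈ a₁ := by rw [ea₁]; simp
  have hu₂a₂ : u₂ ∈ a₂ := by rw [ea₂]; simp
  have hw₂a₂ : w₂ ∈ a₂ := by rw [ea₂]; simp
  have hu₁b₁ : u₁ ∈ b₁ := by rw [eb₁]; simp
  have hu₂b₁ : u₂ ∈ b₁ := by rw [eb₁]; simp
  have hw₁b₂ : w₁ ∈ b₂ := by rw [eb₂]; simp
  have hw₂b₂ : w₂ ∈ b₂ := by rw [eb₂]; simp
  have d1 : u₁ ≠ u₂ := fun h => hdA u₁ hu₁a₁ (h ▸ hu₂a₂)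
  have d2 : u₁ ≠ w₁ := fun h => hdB w₁ (h ▸ hu₁b₁) hw₁b₂
  have d3 : u₁ ≠ w₂ := fun h => hdB w₂ (h ▸ hu₁b₁) hw₂b₂
  have d9 : u₁ ≠ ρ' := fun h => hρ'b₁ (h ▸ hu₁b₁)
  have d10 : u₂ ≠ w₁ := fun h => hdB w₁ (h ▸ hu₂b₁) hw₁b₂
  have d11 : u₂ ≠ w₂ := fun h => hdB w₂ (h ▸ hu₂b₁) hw₂b₂
  have d16 : u₂ ≠ ρ := fun h => hρb₁ (h ▸ hu₂b₁)
  have d17 : u₂ ≠ ρ' := fun h => hρ'b₁ (h ▸ hu₂b₁)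
  have d18 : w₁ ≠ w₂ := fun h => hdA w₁ hw₁a₁ (h ▸ hw₂a₂)
  have d23 : w₁ ≠ ρ := fun h => hρb₂ (h ▸ hw₁b₂)
  have d24 : w₁ ≠ ρ' := fun h => hρ'b₂ (h ▸ hw₁b₂)
  have d29 : w₂ ≠ ρ := fun h => hρb₂ (h ▸ hw₂b₂)
  have d30 : w₂ ≠ ρ' := fun h => hρ'b₂ (h ▸ hw₂b₂)
  by_cases hD1 : ∃ b ∈ B, (ρ ∈ b ∨ ρ' ∈ b) ∧ (t₁ ∈ b ∨ t₂ ∈ b)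
  · obtain ⟨b, hb, hr, htb⟩ := hD1
    rcases hr with hrb | hrb <;> rcases htb with htb | htb
    · exact D1CASE A B horth hAcard hBcard avoidA avoidB probeA probeB a₁ a₂ b₁ b₂ ha₁ ha₂
        hb₁ hb₂ u₁ u₂ w₁ w₂ s₁ s₂ t₁ t₂ ρ ρ' ea₁ ea₂ eb₁ eb₂ hdA hdB ht₁b₁ ht₁b₂ ht₂b₁
        ht₂b₂ hs₁a₁ hs₁a₂ hs₂a₁ hs₂a₂ hρa₁ hρa₂ hρb₁ hρb₂ hρ'a₁ hρ'a₂ hρ'b₁ hρ'b₂ hρρ'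
        hAρ hAρ' hBρ' b hb htb hrb
    · exact D1CASE A B horth hAcard hBcard avoidA avoidB probeA probeB a₂ a₁ b₁ b₂ ha₂ ha₁
        hb₁ hb₂ u₂ u₁ w₂ w₁ s₁ s₂ t₂ t₁ ρ ρ' ea₂ ea₁ (eb₁.trans (Finset.insert_comm _ _ _))
        (eb₂.trans (Finset.insert_comm _ _ _)) (fun v h1 h2 => hdA v h2 h1) hdB ht₂b₁ ht₂b₂
        ht₁b₁ ht₁b₂ hs₁a₂ hs₁a₁ hs₂a₂ hs₂a₁ hρa₂ hρa₁ hρb₁ hρb₂ hρ'a₂ hρ'a₁ hρ'b₁ hρ'b₂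
        hρρ' hAρ hAρ' hBρ' b hb htb hrb
    · exact D1CASE A B horth hAcard hBcard avoidA avoidB probeA probeB a₁ a₂ b₁ b₂ ha₁ ha₂
        hb₁ hb₂ u₁ u₂ w₁ w₂ s₁ s₂ t₁ t₂ ρ' ρ ea₁ ea₂ eb₁ eb₂ hdA hdB ht₁b₁ ht₁b₂ ht₂b₁
        ht₂b₂ hs₁a₁ hs₁a₂ hs₂a₁ hs₂a₂ hρ'a₁ hρ'a₂ hρ'b₁ hρ'b₂ hρa₁ hρa₂ hρb₁ hρb₂
        hρρ'.symm hAρ' hAρ hBρ b hb htb hrb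
    · exact D1CASE A B horth hAcard hBcard avoidA avoidB probeA probeB a₂ a₁ b₁ b₂ ha₂ ha₁
        hb₁ hb₂ u₂ u₁ w₂ w₁ s₁ s₂ t₂ t₁ ρ' ρ ea₂ ea₁ (eb₁.trans (Finset.insert_comm _ _ _))
        (eb₂.trans (Finset.insert_comm _ _ _)) (fun v h1 h2 => hdA v h2 h1) hdB ht₂b₁ ht₂b₂
        ht₁b₁ ht₁b₂ hs₁a₂ hs₁a₁ hs₂a₂ hs₂a₁ hρ'a₂ hρ'a₁ hρ'b₁ hρ'b₂ hρa₂ hρa₁ hρb₁ hρb₂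
        hρρ'.symm hAρ' hAρ hBρ b hb htb hrb
  · have horth' : ∀ b ∈ B, ∀ a ∈ A, (b ∩ a).card = 1 := fun b hb a ha => by
      rw [inter_comm]; exact horth a ha b hb
    by_cases hD2 : ∃ a ∈ A, (ρ ∈ a ∨ ρ' ∈ a) ∧ (s₁ ∈ a ∨ s₂ ∈ a)
    · obtain ⟨a, ha, hr, hsb⟩ := hD2
      rcases hr with hra | hra <;> rcases hsb with hsb | hsb
      · exact D1CASE B A horth' hBcard hAcard avoidB avoidA probeB probeA b₁ b₂ a₁ a₂ hb₁ hb₂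
          ha₁ ha₂ u₁ w₁ u₂ w₂ t₁ t₂ s₁ s₂ ρ ρ' eb₁ eb₂ ea₁ ea₂ hdB hdA hs₁a₁ hs₁a₂ hs₂a₁
          hs₂a₂ ht₁b₁ ht₁b₂ ht₂b₁ ht₂b₂ hρb₁ hρb₂ hρa₁ hρa₂ hρ'b₁ hρ'b₂ hρ'a₁ hρ'a₂ hρρ'
          hBρ hBρ' hAρ' a ha hsb hra
      · exact D1CASE B A horth' hBcard hAcard avoidB avoidA probeB probeA b₂ b₁ a₁ a₂ hb₂ hb₁
          ha₁ ha₂ w₁ u₁ w₂ u₂ t₁ t₂ s₂ s₁ ρ ρ' eb₂ eb₁ (ea₁.trans (Finset.insert_comm _ _ _))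
          (ea₂.trans (Finset.insert_comm _ _ _)) (fun v h1 h2 => hdB v h2 h1) hdA hs₂a₁ hs₂a₂
          hs₁a₁ hs₁a₂ ht₁b₂ ht₁b₁ ht₂b₂ ht₂b₁ hρb₂ hρb₁ hρa₁ hρa₂ hρ'b₂ hρ'b₁ hρ'a₁ hρ'a₂
          hρρ' hBρ hBρ' hAρ' a ha hsb hra
      · exact D1CASE B A horth' hBcard hAcard avoidB avoidA probeB probeA b₁ b₂ a₁ a₂ hb₁ hb₂
          ha₁ ha₂ u₁ w₁ u₂ w₂ t₁ t₂ s₁ s₂ ρ' ρ eb₁ eb₂ ea₁ ea₂ hdB hdA hs₁a₁ hs₁a₂ hs₂a₁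
          hs₂a₂ ht₁b₁ ht₁b₂ ht₂b₁ ht₂b₂ hρ'b₁ hρ'b₂ hρ'a₁ hρ'a₂ hρb₁ hρb₂ hρa₁ hρa₂
          hρρ'.symm hBρ' hBρ hAρ a ha hsb hra
      · exact D1CASE B A horth' hBcard hAcard avoidB avoidA probeB probeA b₂ b₁ a₁ a₂ hb₂ hb₁
          ha₁ ha₂ w₁ u₁ w₂ u₂ t₁ t₂ s₂ s₁ ρ' ρ eb₂ eb₁ (ea₁.trans (Finset.insert_comm _ _ _))
          (ea₂.trans (Finset.insert_comm _ _ _)) (fun v h1 h2 => hdB v h2 h1) hdA hs₂a₁ hs₂a₂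
          hs₁a₁ hs₁a₂ ht₁b₂ ht₁b₁ ht₂b₂ ht₂b₁ hρ'b₂ hρ'b₁ hρ'a₁ hρ'a₂ hρb₂ hρb₁ hρa₁ hρa₂
          hρρ'.symm hBρ' hBρ hAρ a ha hsb hra
    · -- ROOT1 : no degenerate edges
      push_neg at hD1 hD2
      have pin : ∀ r : V, r ∉ b₁ → r ∉ b₂ → (∀ b ∈ B, r ∈ b → t₁ ∉ b ∧ t₂ ∉ b) →
          (∀ a ∈ A, r ∈ a → s₁ ∉ a ∧ s₂ ∉ a) → ∀ a ∈ A, r ∈ a → ∀ b ∈ B, r ∈ b →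
          (u₁ ∈ b ∧ w₂ ∈ b ∧ u₂ ∈ a ∧ w₁ ∈ a) ∨ (w₁ ∈ b ∧ u₂ ∈ b ∧ u₁ ∈ a ∧ w₂ ∈ a) := by
        intro r hrb₁ hrb₂ hrt hrs a ha hra b hb hrb
        have nu₁ : u₁ ≠ r := fun h => hrb₁ (h ▸ hu₁b₁)
        have nu₂ : u₂ ≠ r := fun h => hrb₁ (h ▸ hu₂b₁)
        have nw₁ : w₁ ≠ r := fun h => hrb₂ (h ▸ hw₁b₂)
        have nw₂ : w₂ ≠ r := fun h => hrb₂ (h ▸ hw₂b₂)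
        have hone : ∀ z, z ∈ a → z ∈ b → z = r := by
          intro z hz1 hz2
          obtain ⟨v, hva, hvb, hu⟩ := ortho_common (horth a ha b hb)
          exact (hu z hz1 hz2).trans (hu r hra hrb).symm
        have hx : u₁ ∈ b ∨ w₁ ∈ b := by
          obtain ⟨v, hva, hvb, -⟩ := ortho_common (horth a₁ ha₁ b hb)
          rw [ea₁] at hva; simp only [mem_insert, mem_singleton] at hva
          rcases hva with h | h | h <;> rw [h] at hvb
          · exact Or.inl hvb
          · exact Or.inr hvb
          · exact absurd hvb (hrt b hb hrb).1
        have hy : u₂ ∈ b ∨ w₂ ∈ b := by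
          obtain ⟨v, hva, hvb, -⟩ := ortho_common (horth a₂ ha₂ b hb)
          rw [ea₂] at hva; simp only [mem_insert, mem_singleton] at hva
          rcases hva with h | h | h <;> rw [h] at hvb
          · exact Or.inl hvb
          · exact Or.inr hvb
          · exact absurd hvb (hrt b hb hrb).2
        have hu : u₁ ∈ a ∨ u₂ ∈ a := by
          obtain ⟨v, hva, hvb, -⟩ := ortho_common (horth a ha b₁ hb₁)
          rw [eb₁] at hvb; simp only [mem_insert, mem_singleton] at hvb
          rcases hvb with h | h | h <;> rw [h] at hva
          · exact Or.inl hva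
          · exact Or.inr hva
          · exact absurd hva (hrs a ha hra).1
        have hw : w₁ ∈ a ∨ w₂ ∈ a := by
          obtain ⟨v, hva, hvb, -⟩ := ortho_common (horth a ha b₂ hb₂)
          rw [eb₂] at hvb; simp only [mem_insert, mem_singleton] at hvb
          rcases hvb with h | h | h <;> rw [h] at hva
          · exact Or.inl hva
          · exact Or.inr hva
          · exact absurd hva (hrs a ha hra).2
        rcases hx with hx | hx <;> rcases hy with hy | hy
        · rcases hu with h | h
          · exact absurd (hone u₁ h hx) nu₁
          · exact absurd (hone u₂ h hy) nu₂
        · have hu' : u₂ ∈ a := by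
            rcases hu with h | h
            · exact absurd (hone u₁ h hx) nu₁
            · exact h
          have hw' : w₁ ∈ a := by
            rcases hw with h | h
            · exact h
            · exact absurd (hone w₂ h hy) nw₂
          exact Or.inl ⟨hx, hy, hu', hw'⟩
        · have hu' : u₁ ∈ a := by
            rcases hu with h | h
            · exact h
            · exact absurd (hone u₂ h hy) nu₂
          have hw' : w₂ ∈ a := by
            rcases hw with h | h
            · exact absurd (hone w₁ h hx) nw₁
            · exact h
          exact Or.inr ⟨hx, hy, hu', hw'⟩
        · rcases hw with h | h
          · exact absurd (hone w₁ h hx) nw₁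
          · exact absurd (hone w₂ h hy) nw₂
      obtain ⟨aρ, haρ, hρaρ⟩ := hAρ
      obtain ⟨bρ, hbρ, hρbρ⟩ := hBρ
      obtain ⟨aρ', haρ', hρ'aρ'⟩ := hAρ'
      obtain ⟨bρ', hbρ', hρ'bρ'⟩ := hBρ'
      have p1 := pin ρ hρb₁ hρb₂ (fun b hb h => hD1 b hb (Or.inl h))
        (fun a ha h => hD2 a ha (Or.inl h)) aρ haρ hρaρ bρ hbρ hρbρ
      have p2 := pin ρ' hρ'b₁ hρ'b₂ (fun b hb h => hD1 b hb (Or.inr h))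
        (fun a ha h => hD2 a ha (Or.inr h)) aρ' haρ' hρ'aρ' bρ' hbρ' hρ'bρ'
      have n2' : ∀ p q : V, p ∈ aρ → p ∈ bρ' → q ∈ aρ → q ∈ bρ' → p = q := by
        intro p q hp1 hp2 hq1 hq2
        obtain ⟨v, hva, hvb, hu⟩ := ortho_common (horth aρ haρ bρ' hbρ')
        exact (hu p hp1 hp2).trans (hu q hq1 hq2).symm
      rcases p1 with ⟨hk1, hk2, hk3, hk4⟩ | ⟨hk1, hk2, hk3, hk4⟩ <;>
        rcases p2 with ⟨hm1, hm2, hm3, hm4⟩ | ⟨hm1, hm2, hm3, hm4⟩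
      · have eaρ : aρ = {u₂, w₁, ρ} := eq_triple (hAcard _ haρ) hk3 hk4 hρaρ d10 d16 d23
        obtain ⟨v, hva, hvb, -⟩ := ortho_common (horth aρ haρ bρ' hbρ')
        rw [eaρ] at hva; simp only [mem_insert, mem_singleton] at hva
        rcases hva with h | h | h <;> rw [h] at hvb
        · exact four_not_in_three (hBcard _ hbρ') hm1 hm2 hρ'bρ' hvb d3 d9 d1 d30 d11.symm
            d17.symm
        · exact four_not_in_three (hBcard _ hbρ') hm1 hm2 hρ'bρ' hvb d3 d9 d2 d30 d18.symm
            d24.symm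
        · exact four_not_in_three (hBcard _ hbρ') hm1 hm2 hρ'bρ' hvb d3 d9 (fun h2 => hρb₁
            (h2 ▸ hu₁b₁)) d30 (fun h2 => hρb₂ (h2 ▸ hw₂b₂)) (fun h2 => hρρ' h2.symm)
      · exact d10 (n2' u₂ w₁ hk3 hm2 hk4 hm1)
      · exact d3 (n2' u₁ w₂ hk3 hm1 hk4 hm2)
      · have eaρ : aρ = {u₁, w₂, ρ} := eq_triple (hAcard _ haρ) hk3 hk4 hρaρ d3
          (fun h => hρb₁ (h ▸ hu₁b₁)) d29
        obtain ⟨v, hva, hvb, -⟩ := ortho_common (horth aρ haρ bρ' hbρ')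
        rw [eaρ] at hva; simp only [mem_insert, mem_singleton] at hva
        rcases hva with h | h | h <;> rw [h] at hvb
        · exact four_not_in_three (hBcard _ hbρ') hm1 hm2 hρ'bρ' hvb d10.symm d24 d2.symm
            d17 d1.symm d9.symm
        · exact four_not_in_three (hBcard _ hbρ') hm1 hm2 hρ'bρ' hvb d10.symm d24 d18
            d17 d11 d30.symm
        · exact four_not_in_three (hBcard _ hbρ') hm1 hm2 hρ'bρ' hvb d10.symm d24
            d23 d17 d16 (fun h2 => hρρ' h2.symm)

lemma third_elt {e : Finset V} {p q : V} (h3 : e.card = 3) (hp : p ∈ e) (hq : q ∈ e)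
    (hpq : p ≠ q) : ∃ r, r ∈ e ∧ r ≠ p ∧ r ≠ q ∧ e = {p, q, r} := by
  have hcard : ((e.erase p).erase q).card = 1 := by
    rw [card_erase_of_mem (mem_erase.mpr ⟨hpq.symm, hq⟩), card_erase_of_mem hp, h3]
  obtain ⟨r, hr⟩ := Finset.card_eq_one.mp hcard
  have hrm : r ∈ (e.erase p).erase q := hr ▸ mem_singleton_self r
  have hrq : r ≠ q := (mem_erase.mp hrm).1
  have hrp : r ≠ p := (mem_erase.mp (mem_of_mem_erase hrm)).1
  have hre : r ∈ e := mem_of_mem_erase (mem_of_mem_erase hrm)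
  exact ⟨r, hre, hrp, hrq, eq_triple h3 hp hq hre hpq hrp.symm hrq.symm⟩

set_option maxHeartbeats 2000000 in
/-- in a `(3,3)`-loom on vertex set `V`: `|V| = 9`,
`ν(A) = ν(B) = 3`, and for disjoint `e, f ∈ A`, `V \ (e ∪ f) ∈ A`. -/
theorem stmt18 (A B : Set (Finset V)) (hL : IsLoom 3 3 A B) :
    (vertsH A ∪ vertsH B).ncard = 9 ∧ MatchNumIs A 3 ∧ MatchNumIs B 3 ∧
      (∀ e ∈ A, ∀ f ∈ A, Disjoint e f →
        ∃ g ∈ A, (g : Set V) = (vertsH A ∪ vertsH B) \ ((e : Set V) ∪ (f : Set V))) := by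
  obtain ⟨-, -, horth, hAuni, hBuni, hCovA, hCovB, hAck, hBck⟩ := hL
  have hAmin : ∀ c, IsCoverH A c → 3 ≤ c.card := hCovA.2
  have hBmin : ∀ c, IsCoverH B c → 3 ≤ c.card := hCovB.2
  have closureA : ∀ c : Finset V, c.card = 3 → (∀ b ∈ B, (c ∩ b).Nonempty) → c ∈ A := by
    intro c h1 h2; rw [hAck]; exact ⟨h1, h2⟩
  have closureB : ∀ c : Finset V, c.card = 3 → (∀ a ∈ A, (c ∩ a).Nonempty) → c ∈ B := by
    intro c h1 h2; rw [hBck]; exact ⟨h1, h2⟩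
  have avoidA : ∀ p q : V, ∃ a ∈ A, p ∉ a ∧ q ∉ a := by
    intro p q
    by_contra h
    push_neg at h
    have hcov : IsCoverH A {p, q} := by
      intro e he
      rcases Classical.em (p ∈ e) with hp | hp
      · exact ⟨p, mem_inter.mpr ⟨by simp, hp⟩⟩
      · exact ⟨q, mem_inter.mpr ⟨by simp, h e he hp⟩⟩
    have h1 := hAmin _ hcov
    have h2 : ({p, q} : Finset V).card ≤ 2 := card_insert_le _ _ |>.trans (by simp)
    omega
  have avoidB : ∀ p q : V, ∃ b ∈ B, p ∉ b ∧ q ∉ b := by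
    intro p q
    by_contra h
    push_neg at h
    have hcov : IsCoverH B {p, q} := by
      intro e he
      rcases Classical.em (p ∈ e) with hp | hp
      · exact ⟨p, mem_inter.mpr ⟨by simp, hp⟩⟩
      · exact ⟨q, mem_inter.mpr ⟨by simp, h e he hp⟩⟩
    have h1 := hBmin _ hcov
    have h2 : ({p, q} : Finset V).card ≤ 2 := card_insert_le _ _ |>.trans (by simp)
    omega
  have probeA : ∀ c : Finset V, c.card = 3 → ∀ a₀ ∈ A, ∀ p q : V, p ≠ q → p ∈ c → p ∈ a₀ →
      q ∈ c → q ∈ a₀ → ∃ a ∈ A, ∀ v ∈ c, v ∉ a := by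
    intro c hc a₀ ha₀ p q hpq hpc hpa hqc hqa
    have hcB : c ∉ B := by
      intro hcB
      have h1 := horth a₀ ha₀ c hcB
      have hsub : ({p, q} : Finset V) ⊆ a₀ ∩ c := by
        intro x hx; simp only [mem_insert, mem_singleton] at hx
        rcases hx with rfl | rfl <;> exact mem_inter.mpr ⟨by assumption, by assumption⟩
      have h2 := Finset.card_le_card hsub
      rw [card_insert_of_notMem (by simp [hpq]), card_singleton] at h2
      omega
    have hnc : ¬ IsCoverH A c := by
      intro hcov
      exact hcB (by rw [hBck]; exact ⟨hc, hcov⟩)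
    simp only [IsCoverH, not_forall] at hnc
    obtain ⟨e, he, hne⟩ := hnc
    exact ⟨e, he, fun v hvc hva => hne ⟨v, mem_inter.mpr ⟨hvc, hva⟩⟩⟩
  have probeB : ∀ c : Finset V, c.card = 3 → ∀ b₀ ∈ B, ∀ p q : V, p ≠ q → p ∈ c → p ∈ b₀ →
      q ∈ c → q ∈ b₀ → ∃ b ∈ B, ∀ v ∈ c, v ∉ b := by
    intro c hc b₀ hb₀ p q hpq hpc hpb hqc hqb
    have hcA : c ∉ A := by
      intro hcA
      have h1 := horth c hcA b₀ hb₀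
      have hsub : ({p, q} : Finset V) ⊆ c ∩ b₀ := by
        intro x hx; simp only [mem_insert, mem_singleton] at hx
        rcases hx with rfl | rfl <;> exact mem_inter.mpr ⟨by assumption, by assumption⟩
      have h2 := Finset.card_le_card hsub
      rw [card_insert_of_notMem (by simp [hpq]), card_singleton] at h2
      omega
    have hnc : ¬ IsCoverH B c := by
      intro hcov
      exact hcA (by rw [hAck]; exact ⟨hc, hcov⟩)
    simp only [IsCoverH, not_forall] at hnc
    obtain ⟨e, he, hne⟩ := hnc
    exact ⟨e, he, fun v hvc hvb => hne ⟨v, mem_inter.mpr ⟨hvc, hvb⟩⟩⟩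
  -- nonemptiness
  obtain ⟨cB, hcBcov, hcB3⟩ := hCovB.1
  have hAne : cB ∈ A := closureA cB hcB3 hcBcov
  obtain ⟨cA, hcAcov, hcA3⟩ := hCovA.1
  have hBne : cA ∈ B := closureB cA hcA3 hcAcov
  -- disjoint partners
  have L5A : ∀ a ∈ A, ∃ a' ∈ A, ∀ v ∈ a, v ∉ a' := by
    intro a ha
    by_contra h
    push_neg at h
    have hcov : IsCoverH A a := by
      intro e he
      obtain ⟨v, hv1, hv2⟩ := h e he
      exact ⟨v, mem_inter.mpr ⟨hv1, hv2⟩⟩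
    have haB : a ∈ B := by rw [hBck]; exact ⟨hAuni a ha, hcov⟩
    have h1 := horth a ha a haB
    rw [inter_self] at h1
    have h2 := hAuni a ha
    omega
  have L5B : ∀ b ∈ B, ∃ b' ∈ B, ∀ v ∈ b, v ∉ b' := by
    intro b hb
    by_contra h
    push_neg at h
    have hcov : IsCoverH B b := by
      intro e he
      obtain ⟨v, hv1, hv2⟩ := h e he
      exact ⟨v, mem_inter.mpr ⟨hv1, hv2⟩⟩
    have haA : b ∈ A := by rw [hAck]; exact ⟨hBuni b hb, hcov⟩
    have h1 := horth b haA b hb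
    rw [inter_self] at h1
    have h2 := hBuni b hb
    omega
  -- vertex transfer
  have vertsB_of_A : ∀ v : V, (∃ a ∈ A, v ∈ a) → ∃ b ∈ B, v ∈ b := by
    rintro v ⟨a, ha, hva⟩
    by_contra h
    push_neg at h
    have hcov : IsCoverH B (a.erase v) := by
      intro e he
      obtain ⟨u, hua, hue, -⟩ := ortho_common (horth a ha e he)
      refine ⟨u, mem_inter.mpr ⟨mem_erase.mpr ⟨?_, hua⟩, hue⟩⟩
      rintro rfl
      exact h e he hue
    have h1 := hBmin _ hcov
    have h2 : (a.erase v).card = 2 := by rw [card_erase_of_mem hva, hAuni a ha]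
    omega
  have vertsA_of_B : ∀ v : V, (∃ b ∈ B, v ∈ b) → ∃ a ∈ A, v ∈ a := by
    rintro v ⟨b, hb, hvb⟩
    by_contra h
    push_neg at h
    have hcov : IsCoverH A (b.erase v) := by
      intro e he
      obtain ⟨u, hue, hub, -⟩ := ortho_common (horth e he b hb)
      refine ⟨u, mem_inter.mpr ⟨mem_erase.mpr ⟨?_, hub⟩, hue⟩⟩
      rintro rfl
      exact h e he hue
    have h1 := hAmin _ hcov
    have h2 : (b.erase v).card = 2 := by rw [card_erase_of_mem hvb, hBuni b hb]
    omega
  -- disjoint pairs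
  obtain ⟨a₂, ha₂, hdA⟩ := L5A cB hAne
  set a₁ := cB with ha₁def
  have ha₁ : a₁ ∈ A := hAne
  obtain ⟨b₂, hb₂, hdB⟩ := L5B cA hBne
  set b₁ := cA with hb₁def
  have hb₁ : b₁ ∈ B := hBne
  -- generic coordinates
  have coordA : ∀ a ∈ A, ∃ u w t, a = {u, w, t} ∧ u ∈ b₁ ∧ w ∈ b₂ ∧ t ∉ b₁ ∧ t ∉ b₂ := by
    intro a ha
    obtain ⟨u, hua, hub, huu⟩ := ortho_common (horth a ha b₁ hb₁)
    obtain ⟨w, hwa, hwb, hwu⟩ := ortho_common (horth a ha b₂ hb₂)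
    have huw : u ≠ w := fun h => hdB u hub (h ▸ hwb)
    obtain ⟨t, hta, htu, htw, hteq⟩ := third_elt (hAuni a ha) hua hwa huw
    refine ⟨u, w, t, hteq, hub, hwb, ?_, ?_⟩
    · intro htb₁; exact htu (huu t hta htb₁)
    · intro htb₂; exact htw (hwu t hta htb₂)
  have coordB : ∀ b ∈ B, ∃ x y s, b = {x, y, s} ∧ x ∈ a₁ ∧ y ∈ a₂ ∧ s ∉ a₁ ∧ s ∉ a₂ := by
    intro b hb
    obtain ⟨x, hxa, hxb, hxu⟩ := ortho_common (horth a₁ ha₁ b hb)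
    obtain ⟨y, hya, hyb, hyu⟩ := ortho_common (horth a₂ ha₂ b hb)
    have hxy : x ≠ y := fun h => hdA x hxa (h ▸ hya)
    obtain ⟨s, hsb, hsx, hsy, hseq⟩ := third_elt (hBuni b hb) hxb hyb hxy
    refine ⟨x, y, s, hseq, hxa, hya, ?_, ?_⟩
    · intro hsa₁; exact hsx (hxu s hsa₁ hsb)
    · intro hsa₂; exact hsy (hyu s hsa₂ hsb)
  -- name the special vertices
  obtain ⟨u₁, u₂, s₁, eb₁, hu₁a₁, hu₂a₂, hs₁a₁, hs₁a₂⟩ := coordB b₁ hb₁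
  obtain ⟨w₁, w₂, s₂, eb₂, hw₁a₁, hw₂a₂, hs₂a₁, hs₂a₂⟩ := coordB b₂ hb₂
  have hu₁b₁ : u₁ ∈ b₁ := by rw [eb₁]; simp
  have hu₂b₁ : u₂ ∈ b₁ := by rw [eb₁]; simp
  have hs₁b₁ : s₁ ∈ b₁ := by rw [eb₁]; simp
  have hw₁b₂ : w₁ ∈ b₂ := by rw [eb₂]; simp
  have hw₂b₂ : w₂ ∈ b₂ := by rw [eb₂]; simp
  have hs₂b₂ : s₂ ∈ b₂ := by rw [eb₂]; simp
  have hu₁w₁ : u₁ ≠ w₁ := fun h => hdB u₁ hu₁b₁ (h ▸ hw₁b₂)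
  have hu₂w₂ : u₂ ≠ w₂ := fun h => hdB u₂ hu₂b₁ (h ▸ hw₂b₂)
  obtain ⟨t₁, ht₁a₁, ht₁u₁, ht₁w₁, ea₁⟩ := third_elt (hAuni a₁ ha₁) hu₁a₁ hw₁a₁ hu₁w₁
  obtain ⟨t₂, ht₂a₂, ht₂u₂, ht₂w₂, ea₂⟩ := third_elt (hAuni a₂ ha₂) hu₂a₂ hw₂a₂ hu₂w₂
  have ht₁b₁ : t₁ ∉ b₁ := by
    intro h
    obtain ⟨v, hva, hvb, hvu⟩ := ortho_common (horth a₁ ha₁ b₁ hb₁)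
    have e1 := hvu t₁ ht₁a₁ h
    have e2 := hvu u₁ hu₁a₁ hu₁b₁
    exact ht₁u₁ (e1.trans e2.symm)
  have ht₁b₂ : t₁ ∉ b₂ := by
    intro h
    obtain ⟨v, hva, hvb, hvu⟩ := ortho_common (horth a₁ ha₁ b₂ hb₂)
    have e1 := hvu t₁ ht₁a₁ h
    have e2 := hvu w₁ hw₁a₁ hw₁b₂
    exact ht₁w₁ (e1.trans e2.symm)
  have ht₂b₁ : t₂ ∉ b₁ := by
    intro h
    obtain ⟨v, hva, hvb, hvu⟩ := ortho_common (horth a₂ ha₂ b₁ hb₁)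
    have e1 := hvu t₂ ht₂a₂ h
    have e2 := hvu u₂ hu₂a₂ hu₂b₁
    exact ht₂u₂ (e1.trans e2.symm)
  have ht₂b₂ : t₂ ∉ b₂ := by
    intro h
    obtain ⟨v, hva, hvb, hvu⟩ := ortho_common (horth a₂ ha₂ b₂ hb₂)
    have e1 := hvu t₂ ht₂a₂ h
    have e2 := hvu w₂ hw₂a₂ hw₂b₂
    exact ht₂w₂ (e1.trans e2.symm)
  have hdA' : ∀ v, v ∈ a₁ → v ∈ a₂ → False := fun v h1 h2 => hdA v h1 h2
  have hdB' : ∀ v, v ∈ b₁ → v ∈ b₂ → False := fun v h1 h2 => hdB v h1 h2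
  -- the ninth vertex
  obtain ⟨a0, ha0, ht₁a0, ht₂a0⟩ := avoidA t₁ t₂
  obtain ⟨u0, w0, ρ0, ea0, hu0, hw0, hρ0b₁, hρ0b₂⟩ := coordA a0 ha0
  have hρ0a0 : ρ0 ∈ a0 := by rw [ea0]; simp
  have hρ0a₁ : ρ0 ∉ a₁ := by
    intro h
    rw [ea₁] at h; simp only [mem_insert, mem_singleton] at h
    rcases h with h | h | h
    · exact hρ0b₁ (h ▸ hu₁b₁)
    · exact hρ0b₂ (h ▸ hw₁b₂)
    · rw [h] at hρ0a0; exact ht₁a0 hρ0a0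
  have hρ0a₂ : ρ0 ∉ a₂ := by
    intro h
    rw [ea₂] at h; simp only [mem_insert, mem_singleton] at h
    rcases h with h | h | h
    · exact hρ0b₁ (h ▸ hu₂b₁)
    · exact hρ0b₂ (h ▸ hw₂b₂)
    · rw [h] at hρ0a0; exact ht₂a0 hρ0a0
  have hAρ0 : ∃ a ∈ A, ρ0 ∈ a := ⟨a0, ha0, hρ0a0⟩
  have hBρ0 : ∃ b ∈ B, ρ0 ∈ b := vertsB_of_A ρ0 hAρ0
  -- uniqueness of the ninth vertex
  have uniq : ∀ v : V, v ∉ a₁ → v ∉ a₂ → v ∉ b₁ → v ∉ b₂ → (∃ a ∈ A, v ∈ a) → v = ρ0 := by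
    intro v hv1 hv2 hv3 hv4 hvA
    by_contra hne
    exact MAIN A B horth hAuni hBuni avoidA avoidB probeA probeB a₁ a₂ b₁ b₂ ha₁ ha₂ hb₁ hb₂
      u₁ u₂ w₁ w₂ s₁ s₂ t₁ t₂ v ρ0 ea₁ ea₂ eb₁ eb₂ hdA' hdB' ht₁b₁ ht₁b₂ ht₂b₁ ht₂b₂
      hs₁a₁ hs₁a₂ hs₂a₁ hs₂a₂ hv1 hv2 hv3 hv4 hρ0a₁ hρ0a₂ hρ0b₁ hρ0b₂ hne
      hvA hAρ0 (vertsB_of_A v hvA) hBρ0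
  -- distinctness pack
  have hu₁a₂ : u₁ ∉ a₂ := fun h => hdA u₁ hu₁a₁ h
  have hw₁a₂ : w₁ ∉ a₂ := fun h => hdA w₁ hw₁a₁ h
  have ht₁a₂ : t₁ ∉ a₂ := fun h => hdA t₁ ht₁a₁ h
  have hu₂a₁ : u₂ ∉ a₁ := fun h => hdA u₂ h hu₂a₂
  have hw₂a₁ : w₂ ∉ a₁ := fun h => hdA w₂ h hw₂a₂
  have ht₂a₁ : t₂ ∉ a₁ := fun h => hdA t₂ h ht₂a₂
  have hu₁b₂ : u₁ ∉ b₂ := fun h => hdB u₁ hu₁b₁ h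
  have hu₂b₂ : u₂ ∉ b₂ := fun h => hdB u₂ hu₂b₁ h
  have hs₁b₂ : s₁ ∉ b₂ := fun h => hdB s₁ hs₁b₁ h
  have hw₁b₁ : w₁ ∉ b₁ := fun h => hdB w₁ h hw₁b₂
  have hw₂b₁ : w₂ ∉ b₁ := fun h => hdB w₂ h hw₂b₂
  have hs₂b₁ : s₂ ∉ b₁ := fun h => hdB s₂ h hs₂b₂
  have d1 : u₁ ≠ u₂ := fun h => hu₁a₂ (h ▸ hu₂a₂)
  have d2 : u₁ ≠ w₁ := hu₁w₁
  have d3 : u₁ ≠ w₂ := fun h => hw₂b₁ (h ▸ hu₁b₁)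
  have d4 : u₁ ≠ s₁ := fun h => hs₁a₁ (h ▸ hu₁a₁)
  have d5 : u₁ ≠ s₂ := fun h => hs₂b₁ (h ▸ hu₁b₁)
  have d6 : u₁ ≠ t₁ := fun h => ht₁b₁ (h ▸ hu₁b₁)
  have d7 : u₁ ≠ t₂ := fun h => ht₂b₁ (h ▸ hu₁b₁)
  have d8 : u₁ ≠ ρ0 := fun h => hρ0b₁ (h ▸ hu₁b₁)
  have d10 : u₂ ≠ w₁ := fun h => hw₁b₁ (h ▸ hu₂b₁)
  have d11 : u₂ ≠ w₂ := hu₂w₂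
  have d12 : u₂ ≠ s₁ := fun h => hs₁a₂ (h ▸ hu₂a₂)
  have d13 : u₂ ≠ s₂ := fun h => hs₂b₁ (h ▸ hu₂b₁)
  have d14 : u₂ ≠ t₁ := fun h => ht₁b₁ (h ▸ hu₂b₁)
  have d15 : u₂ ≠ t₂ := fun h => ht₂b₁ (h ▸ hu₂b₁)
  have d16 : u₂ ≠ ρ0 := fun h => hρ0b₁ (h ▸ hu₂b₁)
  have d18 : w₁ ≠ w₂ := fun h => hw₁a₂ (h ▸ hw₂a₂)
  have d19 : w₁ ≠ s₁ := fun h => hs₁b₂ (h ▸ hw₁b₂)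
  have d20 : w₁ ≠ s₂ := fun h => hs₂a₁ (h ▸ hw₁a₁)
  have d21 : w₁ ≠ t₁ := fun h => ht₁b₂ (h ▸ hw₁b₂)
  have d22 : w₁ ≠ t₂ := fun h => ht₂b₂ (h ▸ hw₁b₂)
  have d23 : w₁ ≠ ρ0 := fun h => hρ0b₂ (h ▸ hw₁b₂)
  have d25 : w₂ ≠ s₁ := fun h => hs₁b₂ (h ▸ hw₂b₂)
  have d26 : w₂ ≠ s₂ := fun h => hs₂a₂ (h ▸ hw₂a₂)
  have d27 : w₂ ≠ t₁ := fun h => ht₁b₂ (h ▸ hw₂b₂)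
  have d28 : w₂ ≠ t₂ := fun h => ht₂b₂ (h ▸ hw₂b₂)
  have d29 : w₂ ≠ ρ0 := fun h => hρ0b₂ (h ▸ hw₂b₂)
  have d31 : s₁ ≠ s₂ := fun h => hs₁b₂ (h ▸ hs₂b₂)
  have d32 : s₁ ≠ t₁ := fun h => ht₁b₁ (h ▸ hs₁b₁)
  have d33 : s₁ ≠ t₂ := fun h => ht₂b₁ (h ▸ hs₁b₁)
  have d34 : s₁ ≠ ρ0 := fun h => hρ0b₁ (h ▸ hs₁b₁)
  have d36 : s₂ ≠ t₁ := fun h => ht₁b₂ (h ▸ hs₂b₂)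
  have d37 : s₂ ≠ t₂ := fun h => ht₂b₂ (h ▸ hs₂b₂)
  have d38 : s₂ ≠ ρ0 := fun h => hρ0b₂ (h ▸ hs₂b₂)
  have d40 : t₁ ≠ t₂ := fun h => ht₁a₂ (h ▸ ht₂a₂)
  have d41 : t₁ ≠ ρ0 := fun h => hρ0a₁ (h ▸ ht₁a₁)
  have d43 : t₂ ≠ ρ0 := fun h => hρ0a₂ (h ▸ ht₂a₂)
  -- the nine-element vertex set
  set V9 : Finset V := {u₁, u₂, w₁, w₂, s₁, s₂, t₁, t₂, ρ0} with hV9def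
  have hV9card : V9.card = 9 := by
    rw [hV9def]
    rw [card_insert_of_notMem (by simp [d1, d2, d3, d4, d5, d6, d7, d8])]
    rw [card_insert_of_notMem (by simp [d10, d11, d12, d13, d14, d15, d16])]
    rw [card_insert_of_notMem (by simp [d18, d19, d20, d21, d22, d23])]
    rw [card_insert_of_notMem (by simp [d25, d26, d27, d28, d29])]
    rw [card_insert_of_notMem (by simp [d31, d32, d33, d34])]
    rw [card_insert_of_notMem (by simp [d36, d37, d38])]
    rw [card_insert_of_notMem (by simp [d40, d41])]
    rw [card_insert_of_notMem (by simp [d43]), card_singleton]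
  have hu₁V9 : u₁ ∈ V9 := by rw [hV9def]; simp
  have hu₂V9 : u₂ ∈ V9 := by rw [hV9def]; simp
  have ht₁V9 : t₁ ∈ V9 := by rw [hV9def]; simp
  have ht₂V9 : t₂ ∈ V9 := by rw [hV9def]; simp
  have hρ0V9 : ρ0 ∈ V9 := by rw [hV9def]; simp
  -- every edge is inside V9
  have edgeA_sub : ∀ e ∈ A, e ⊆ V9 := by
    intro e he
    obtain ⟨u, w, t, hee, hub, hwb, ht1, ht2⟩ := coordA e he
    intro v hv
    rw [hee] at hv
    simp only [mem_insert, mem_singleton] at hv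
    rcases hv with h | h | h <;> rw [h]
    · rw [eb₁] at hub; simp only [mem_insert, mem_singleton] at hub
      rcases hub with h2 | h2 | h2 <;> rw [h2] <;> (rw [hV9def]; simp)
    · rw [eb₂] at hwb; simp only [mem_insert, mem_singleton] at hwb
      rcases hwb with h2 | h2 | h2 <;> rw [h2] <;> (rw [hV9def]; simp)
    · have hte : t ∈ e := by rw [hee]; simp
      by_cases h1 : t ∈ a₁
      · rw [ea₁] at h1; simp only [mem_insert, mem_singleton] at h1
        rcases h1 with h3 | h3 | h3 <;> rw [h3]
        · exact absurd (h3 ▸ hu₁b₁) ht1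
        · exact absurd (h3 ▸ hw₁b₂) ht2
        · exact ht₁V9
      · by_cases h2 : t ∈ a₂
        · rw [ea₂] at h2; simp only [mem_insert, mem_singleton] at h2
          rcases h2 with h3 | h3 | h3 <;> rw [h3]
          · exact absurd (h3 ▸ hu₂b₁) ht1
          · exact absurd (h3 ▸ hw₂b₂) ht2
          · exact ht₂V9
        · have := uniq t h1 h2 ht1 ht2 ⟨e, he, hte⟩
          rw [this]; exact hρ0V9
  have edgeB_sub : ∀ e ∈ B, e ⊆ V9 := by
    intro e he
    obtain ⟨x, y, sc, hee, hxa, hya, hs1, hs2⟩ := coordB e he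
    intro v hv
    rw [hee] at hv
    simp only [mem_insert, mem_singleton] at hv
    rcases hv with h | h | h <;> rw [h]
    · rw [ea₁] at hxa; simp only [mem_insert, mem_singleton] at hxa
      rcases hxa with h2 | h2 | h2 <;> rw [h2] <;> (rw [hV9def]; simp)
    · rw [ea₂] at hya; simp only [mem_insert, mem_singleton] at hya
      rcases hya with h2 | h2 | h2 <;> rw [h2] <;> (rw [hV9def]; simp)
    · have hse : sc ∈ e := by rw [hee]; simp
      by_cases h1 : sc ∈ b₁
      · rw [eb₁] at h1; simp only [mem_insert, mem_singleton] at h1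
        rcases h1 with h3 | h3 | h3 <;> rw [h3]
        · exact absurd (h3 ▸ hu₁a₁) hs1
        · exact absurd (h3 ▸ hu₂a₂) hs2
        · rw [hV9def]; simp
      · by_cases h2 : sc ∈ b₂
        · rw [eb₂] at h2; simp only [mem_insert, mem_singleton] at h2
          rcases h2 with h3 | h3 | h3 <;> rw [h3]
          · exact absurd (h3 ▸ hw₁a₁) hs1
          · exact absurd (h3 ▸ hw₂a₂) hs2
          · rw [hV9def]; simp
        · have := uniq sc hs1 hs2 h1 h2 (vertsA_of_B sc ⟨e, he, hse⟩)
          rw [this]; exact hρ0V9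
  -- verts = V9
  have hverts : vertsH A ∪ vertsH B = (↑V9 : Set V) := by
    apply Set.Subset.antisymm
    · rintro x (hx | hx)
      · simp only [vertsH, Set.mem_iUnion] at hx
        obtain ⟨e, he, hxe⟩ := hx
        exact Finset.mem_coe.mpr (edgeA_sub e he (Finset.mem_coe.mp hxe))
      · simp only [vertsH, Set.mem_iUnion] at hx
        obtain ⟨e, he, hxe⟩ := hx
        exact Finset.mem_coe.mpr (edgeB_sub e he (Finset.mem_coe.mp hxe))
    · intro x hx
      rw [Finset.mem_coe, hV9def] at hx
      simp only [mem_insert, mem_singleton] at hx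
      have hmA : ∀ (e : Finset V), e ∈ A → x ∈ e → x ∈ vertsH A ∪ vertsH B := by
        intro e he hxe
        exact Or.inl (Set.mem_biUnion he (Finset.mem_coe.mpr hxe))
      have hmB : ∀ (e : Finset V), e ∈ B → x ∈ e → x ∈ vertsH A ∪ vertsH B := by
        intro e he hxe
        exact Or.inr (Set.mem_biUnion he (Finset.mem_coe.mpr hxe))
      rcases hx with rfl | rfl | rfl | rfl | rfl | rfl | rfl | rfl | rfl
      · exact hmA a₁ ha₁ hu₁a₁
      · exact hmA a₂ ha₂ hu₂a₂
      · exact hmA a₁ ha₁ hw₁a₁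
      · exact hmA a₂ ha₂ hw₂a₂
      · exact hmB b₁ hb₁ hs₁b₁
      · exact hmB b₂ hb₂ hs₂b₂
      · exact hmA a₁ ha₁ ht₁a₁
      · exact hmA a₂ ha₂ ht₂a₂
      · exact hmA a0 ha0 hρ0a0
  -- complement edges
  have compA : ∀ e ∈ A, ∀ f ∈ A, Disjoint e f → (V9 \ (e ∪ f)) ∈ A := by
    intro e he f hf hdisj
    have hesub := edgeA_sub e he
    have hfsub := edgeA_sub f hf
    have hEFsub : e ∪ f ⊆ V9 := union_subset hesub hfsub
    have hcard : (V9 \ (e ∪ f)).card = 3 := by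
      rw [card_sdiff_of_subset hEFsub, card_union_of_disjoint hdisj, hAuni e he, hAuni f hf, hV9card]
    apply closureA _ hcard
    intro b hb
    have h1 : (b ∩ e).card = 1 := by rw [inter_comm]; exact horth e he b hb
    have h2 : (b ∩ f).card = 1 := by rw [inter_comm]; exact horth f hf b hb
    have hbcard := hBuni b hb
    have hsub2 : ¬ b ⊆ e ∪ f := by
      intro hsub
      have he2 : b = (b ∩ e) ∪ (b ∩ f) := by
        rw [← inter_union_distrib_left]
        exact (inter_eq_left.mpr hsub).symm
      have hle := card_union_le (b ∩ e) (b ∩ f)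
      rw [← he2] at hle
      omega
    obtain ⟨v, hvb, hvef⟩ := Finset.not_subset.mp hsub2
    exact ⟨v, mem_inter.mpr ⟨mem_sdiff.mpr ⟨edgeB_sub b hb hvb, hvef⟩, hvb⟩⟩
  have compB : ∀ e ∈ B, ∀ f ∈ B, Disjoint e f → (V9 \ (e ∪ f)) ∈ B := by
    intro e he f hf hdisj
    have hesub := edgeB_sub e he
    have hfsub := edgeB_sub f hf
    have hEFsub : e ∪ f ⊆ V9 := union_subset hesub hfsub
    have hcard : (V9 \ (e ∪ f)).card = 3 := by
      rw [card_sdiff_of_subset hEFsub, card_union_of_disjoint hdisj, hBuni e he, hBuni f hf, hV9card]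
    apply closureB _ hcard
    intro a ha
    have h1 : (a ∩ e).card = 1 := horth a ha e he
    have h2 : (a ∩ f).card = 1 := horth a ha f hf
    have hacard := hAuni a ha
    have hsub2 : ¬ a ⊆ e ∪ f := by
      intro hsub
      have he2 : a = (a ∩ e) ∪ (a ∩ f) := by
        rw [← inter_union_distrib_left]
        exact (inter_eq_left.mpr hsub).symm
      have hle := card_union_le (a ∩ e) (a ∩ f)
      rw [← he2] at hle
      omega
    obtain ⟨v, hva, hvef⟩ := Finset.not_subset.mp hsub2
    exact ⟨v, mem_inter.mpr ⟨mem_sdiff.mpr ⟨edgeA_sub a ha hva, hvef⟩, hva⟩⟩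
  -- matching upper bounds
  have matchboundA : ∀ M, IsMatchingH A M → M.card ≤ 3 := by
    intro M hM
    classical
    have hmaps : ∀ e ∈ M, (fun e => if h : (e ∩ b₁).Nonempty then h.choose else u₁) e ∈ b₁ := by
      intro e heM
      have heA : e ∈ A := hM.1 heM
      have hne : (e ∩ b₁).Nonempty := by
        rw [← Finset.card_pos, horth e heA b₁ hb₁]; norm_num
      simp only [dif_pos hne]
      exact (mem_inter.mp hne.choose_spec).2
    have hinj : Set.InjOn (fun e => if h : (e ∩ b₁).Nonempty then h.choose else u₁) ↑M := by
      intro e heM f hfM hef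
      by_contra hne
      have heA : e ∈ A := hM.1 heM
      have hfA : f ∈ A := hM.1 hfM
      have hdisj := hM.2 heM hfM hne
      have hne1 : (e ∩ b₁).Nonempty := by
        rw [← Finset.card_pos, horth e heA b₁ hb₁]; norm_num
      have hne2 : (f ∩ b₁).Nonempty := by
        rw [← Finset.card_pos, horth f hfA b₁ hb₁]; norm_num
      simp only [dif_pos hne1, dif_pos hne2] at hef
      have h1 : hne1.choose ∈ e := (mem_inter.mp hne1.choose_spec).1
      have h2 : hne2.choose ∈ f := (mem_inter.mp hne2.choose_spec).1
      rw [hef] at h1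
      exact Finset.disjoint_left.mp hdisj h1 h2
    have := Finset.card_le_card_of_injOn _ hmaps hinj
    rw [hBuni b₁ hb₁] at this
    exact this
  have matchboundB : ∀ M, IsMatchingH B M → M.card ≤ 3 := by
    intro M hM
    classical
    have hmaps : ∀ e ∈ M, (fun e => if h : (e ∩ a₁).Nonempty then h.choose else u₁) e ∈ a₁ := by
      intro e heM
      have heB : e ∈ B := hM.1 heM
      have hne : (e ∩ a₁).Nonempty := by
        rw [← Finset.card_pos, inter_comm, horth a₁ ha₁ e heB]; norm_num
      simp only [dif_pos hne]
      exact (mem_inter.mp hne.choose_spec).2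
    have hinj : Set.InjOn (fun e => if h : (e ∩ a₁).Nonempty then h.choose else u₁) ↑M := by
      intro e heM f hfM hef
      by_contra hne
      have heB : e ∈ B := hM.1 heM
      have hfB : f ∈ B := hM.1 hfM
      have hdisj := hM.2 heM hfM hne
      have hne1 : (e ∩ a₁).Nonempty := by
        rw [← Finset.card_pos, inter_comm, horth a₁ ha₁ e heB]; norm_num
      have hne2 : (f ∩ a₁).Nonempty := by
        rw [← Finset.card_pos, inter_comm, horth a₁ ha₁ f hfB]; norm_num
      simp only [dif_pos hne1, dif_pos hne2] at hef
      have h1 : hne1.choose ∈ e := (mem_inter.mp hne1.choose_spec).1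
      have h2 : hne2.choose ∈ f := (mem_inter.mp hne2.choose_spec).1
      rw [hef] at h1
      exact Finset.disjoint_left.mp hdisj h1 h2
    have := Finset.card_le_card_of_injOn _ hmaps hinj
    rw [hAuni a₁ ha₁] at this
    exact this
  -- matchings of size 3
  have hdisjA12 : Disjoint a₁ a₂ := Finset.disjoint_left.mpr (fun {v} hv hvf => hdA v hv hvf)
  have hdisjB12 : Disjoint b₁ b₂ := Finset.disjoint_left.mpr (fun {v} hv hvf => hdB v hv hvf)
  have hgA : (V9 \ (a₁ ∪ a₂)) ∈ A := compA a₁ ha₁ a₂ ha₂ hdisjA12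
  have hgB : (V9 \ (b₁ ∪ b₂)) ∈ B := compB b₁ hb₁ b₂ hb₂ hdisjB12
  have hdisjA1g : Disjoint a₁ (V9 \ (a₁ ∪ a₂)) := by
    rw [Finset.disjoint_left]
    intro v hv hvg
    exact (mem_sdiff.mp hvg).2 (mem_union_left _ hv)
  have hdisjA2g : Disjoint a₂ (V9 \ (a₁ ∪ a₂)) := by
    rw [Finset.disjoint_left]
    intro v hv hvg
    exact (mem_sdiff.mp hvg).2 (mem_union_right _ hv)
  have hdisjB1g : Disjoint b₁ (V9 \ (b₁ ∪ b₂)) := by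
    rw [Finset.disjoint_left]
    intro v hv hvg
    exact (mem_sdiff.mp hvg).2 (mem_union_left _ hv)
  have hdisjB2g : Disjoint b₂ (V9 \ (b₁ ∪ b₂)) := by
    rw [Finset.disjoint_left]
    intro v hv hvg
    exact (mem_sdiff.mp hvg).2 (mem_union_right _ hv)
  have hne12A : a₁ ≠ a₂ := fun h => hdA u₁ hu₁a₁ (h ▸ hu₁a₁)
  have hne1gA : a₁ ≠ V9 \ (a₁ ∪ a₂) := fun h =>
    Finset.disjoint_left.mp hdisjA1g hu₁a₁ (h ▸ hu₁a₁)
  have hne2gA : a₂ ≠ V9 \ (a₁ ∪ a₂) := fun h =>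
    Finset.disjoint_left.mp hdisjA2g hu₂a₂ (h ▸ hu₂a₂)
  have hne12B : b₁ ≠ b₂ := fun h => hdB u₁ hu₁b₁ (h ▸ hu₁b₁)
  have hne1gB : b₁ ≠ V9 \ (b₁ ∪ b₂) := fun h =>
    Finset.disjoint_left.mp hdisjB1g hu₁b₁ (h ▸ hu₁b₁)
  have hne2gB : b₂ ≠ V9 \ (b₁ ∪ b₂) := fun h =>
    Finset.disjoint_left.mp hdisjB2g hw₁b₂ (h ▸ hw₁b₂)
  refine ⟨?_, ⟨⟨{a₁, a₂, V9 \ (a₁ ∪ a₂)}, ⟨?_, ?_⟩, ?_⟩, matchboundA⟩,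
    ⟨⟨{b₁, b₂, V9 \ (b₁ ∪ b₂)}, ⟨?_, ?_⟩, ?_⟩, matchboundB⟩, ?_⟩
  · rw [hverts, Set.ncard_coe_finset]; exact hV9card
  · intro e he
    simp only [Finset.coe_insert, Set.mem_insert_iff, Finset.coe_singleton,
      Set.mem_singleton_iff, Finset.mem_coe, mem_insert, mem_singleton] at he
    rcases he with rfl | rfl | rfl
    · exact ha₁
    · exact ha₂
    · exact hgA
  · intro e he f hf hef
    simp only [Finset.coe_insert, Set.mem_insert_iff, Finset.mem_coe, mem_insert,
      Finset.coe_singleton, Set.mem_singleton_iff, mem_singleton] at he hf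
    rcases he with rfl | rfl | rfl <;> rcases hf with rfl | rfl | rfl <;>
      first
        | exact absurd rfl hef
        | exact hdisjA12
        | exact hdisjA12.symm
        | exact hdisjA1g
        | exact hdisjA1g.symm
        | exact hdisjA2g
        | exact hdisjA2g.symm
  · rw [card_insert_of_notMem (by simp [hne12A, hne1gA]),
      card_insert_of_notMem (by simp [hne2gA]), card_singleton]
  · intro e he
    simp only [Finset.coe_insert, Set.mem_insert_iff, Finset.coe_singleton,
      Set.mem_singleton_iff, Finset.mem_coe, mem_insert, mem_singleton] at he
    rcases he with rfl | rfl | rfl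
    · exact hb₁
    · exact hb₂
    · exact hgB
  · intro e he f hf hef
    simp only [Finset.coe_insert, Set.mem_insert_iff, Finset.mem_coe, mem_insert,
      Finset.coe_singleton, Set.mem_singleton_iff, mem_singleton] at he hf
    rcases he with rfl | rfl | rfl <;> rcases hf with rfl | rfl | rfl <;>
      first
        | exact absurd rfl hef
        | exact hdisjB12
        | exact hdisjB12.symm
        | exact hdisjB1g
        | exact hdisjB1g.symm
        | exact hdisjB2g
        | exact hdisjB2g.symm
  · rw [card_insert_of_notMem (by simp [hne12B, hne1gB]),
      card_insert_of_notMem (by simp [hne2gB]), card_singleton]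
  · intro e he f hf hDisj
    refine ⟨V9 \ (e ∪ f), compA e he f hf hDisj, ?_⟩
    rw [hverts, Finset.coe_sdiff, Finset.coe_union]
end

section
/- In a (3,3)-loom (A,B), the conditions (i) |V| = 9, (ii) ν(A) = 3, and (iii) for all disjoint e, f ∈ A, V \ (e∪f) ∈ A, are pairwise equivalent. -/
open Finset

variable {V : Type*} [DecidableEq V]

/-- in a `(3,3)`-loom, the conditions `|V| = 9`, `ν(A) = 3`, and
"for all disjoint `e, f ∈ A`, `V \ (e ∪ f) ∈ A`" are pairwise equivalent. -/
theorem stmt19 (A B : Set (Finset V)) (hL : IsLoom 3 3 A B) :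
    ((vertsH A ∪ vertsH B).ncard = 9 ↔ MatchNumIs A 3) ∧
    (MatchNumIs A 3 ↔
      (∀ e ∈ A, ∀ f ∈ A, Disjoint e f →
        ∃ g ∈ A, (g : Set V) = (vertsH A ∪ vertsH B) \ ((e : Set V) ∪ (f : Set V)))) ∧
    ((vertsH A ∪ vertsH B).ncard = 9 ↔
      (∀ e ∈ A, ∀ f ∈ A, Disjoint e f →
        ∃ g ∈ A, (g : Set V) = (vertsH A ∪ vertsH B) \ ((e : Set V) ∪ (f : Set V)))) := by

  obtain ⟨-, -, orth, uA, uB, cA, cB, hA, hB⟩ := hL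
  -- A and B are nonempty
  have hAne : A.Nonempty := by
    by_contra h
    rw [Set.not_nonempty_iff_eq_empty] at h
    have h0 : IsCoverH A (∅ : Finset V) := by
      intro e he; rw [h] at he; exact absurd he (Set.notMem_empty e)
    have := cA.2 ∅ h0
    simp at this
  have hBne : B.Nonempty := by
    by_contra h
    rw [Set.not_nonempty_iff_eq_empty] at h
    have h0 : IsCoverH B (∅ : Finset V) := by
      intro e he; rw [h] at he; exact absurd he (Set.notMem_empty e)
    have := cB.2 ∅ h0
    simp at this
  -- every vertex of A lies in some edge of B
  have hAB : vertsH A ⊆ vertsH B := by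
    intro v hv
    simp only [vertsH, Set.mem_iUnion, Finset.mem_coe] at hv ⊢
    obtain ⟨a, ha, hva⟩ := hv
    have haC : IsCoverH B a := by
      rw [hA] at ha; exact ha.2
    have h2 : ¬ IsCoverH B (a.erase v) := by
      intro hc
      have h3 := cB.2 _ hc
      have hcard : (a.erase v).card = 2 := by
        rw [Finset.card_erase_of_mem hva, uA a ha]
      omega
    have h2' : ∃ b ∈ B, (a.erase v ∩ b) = ∅ := by
      by_contra hc
      push_neg at hc
      exact h2 (fun e he => hc e he)
    obtain ⟨b, hb, hbe⟩ := h2'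
    have h1 : (a ∩ b).Nonempty := by
      have := orth a ha b hb
      exact Finset.card_pos.mp (by omega)
    obtain ⟨w, hw⟩ := h1
    rw [Finset.mem_inter] at hw
    have hwv : w = v := by
      by_contra hne
      have hmem : w ∈ a.erase v ∩ b :=
        Finset.mem_inter.mpr ⟨Finset.mem_erase.mpr ⟨hne, hw.1⟩, hw.2⟩
      rw [hbe] at hmem
      exact absurd hmem (Finset.notMem_empty w)
    exact ⟨b, hb, hwv ▸ hw.2⟩
  -- there exist two disjoint edges in A
  have hdis : ∃ e ∈ A, ∃ f ∈ A, Disjoint e f := by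
    by_contra hc
    push_neg at hc
    obtain ⟨a, ha⟩ := hAne
    have haB : a ∈ B := by
      rw [hB]
      refine ⟨uA a ha, fun e he => ?_⟩
      rcases Finset.not_disjoint_iff.mp (hc a ha e he) with ⟨x, hx1, hx2⟩
      exact ⟨x, Finset.mem_inter.mpr ⟨hx1, hx2⟩⟩
    have := orth a ha a haB
    rw [Finset.inter_self, uA a ha] at this
    omega
  -- matching upper bound
  have hub : ∀ M, IsMatchingH A M → M.card ≤ 3 := by
    intro M hM
    rcases M.eq_empty_or_nonempty with rfl | ⟨e0, he0⟩
    · simp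
    · have he0A : e0 ∈ A := hM.1 he0
      have hne0 : e0.Nonempty := Finset.card_pos.mp (by rw [uA e0 he0A]; omega)
      haveI : Nonempty V := ⟨hne0.choose⟩
      obtain ⟨b, hb⟩ := hBne
      have key : ∀ e ∈ M, (e ∩ b).Nonempty := by
        intro e he
        have := orth e (hM.1 he) b hb
        exact Finset.card_pos.mp (by omega)
      have h1 : M.card ≤ b.card := by
        apply Finset.card_le_card_of_injOn
          (fun e => if h : (e ∩ b).Nonempty then h.choose else Classical.arbitrary V)
        · intro e he
          dsimp only
          rw [dif_pos (key e he)]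
          exact (Finset.mem_inter.mp (key e he).choose_spec).2
        · intro e he g hg heg
          simp only [Finset.mem_coe] at he hg
          dsimp only at heg
          by_contra hne
          rw [dif_pos (key e he), dif_pos (key g hg)] at heg
          have hx1 := (Finset.mem_inter.mp (key e he).choose_spec).1
          have hx2 := (Finset.mem_inter.mp (key g hg).choose_spec).1
          rw [heg] at hx1
          exact (Finset.disjoint_left.mp (hM.2 he hg hne)) hx1 hx2
      rw [uB b hb] at h1
      exact h1
  -- (ii) → (i)
  have h21 : MatchNumIs A 3 → (vertsH A ∪ vertsH B).ncard = 9 := by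
    rintro ⟨⟨M, hM, hMcard⟩, -⟩
    set T := M.biUnion id with hT
    have hdisj : ∀ x ∈ M, ∀ y ∈ M, x ≠ y → Disjoint (id x) (id y) :=
      fun x hx y hy hxy => hM.2 hx hy hxy
    have hTcard : T.card = 9 := by
      rw [hT, Finset.card_biUnion hdisj]
      have hcc : ∀ e ∈ M, (id e).card = 3 := fun e he => uA e (hM.1 he)
      rw [Finset.sum_congr rfl hcc, Finset.sum_const, hMcard]
      rfl
    have hbT : ∀ b ∈ B, b ⊆ T := by
      intro b hb
      have h1 : b ∩ T = M.biUnion (fun e => b ∩ e) := by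
        ext x
        simp only [hT, Finset.mem_inter, Finset.mem_biUnion, id]
        constructor
        · rintro ⟨hxb, e, heM, hxe⟩; exact ⟨e, heM, hxb, hxe⟩
        · rintro ⟨e, heM, hxb, hxe⟩; exact ⟨hxb, e, heM, hxe⟩
      have h2 : (b ∩ T).card = 3 := by
        rw [h1, Finset.card_biUnion]
        · have hcc : ∀ e ∈ M, (b ∩ e).card = 1 := by
            intro e he
            rw [Finset.inter_comm]
            exact orth e (hM.1 he) b hb
          rw [Finset.sum_congr rfl hcc, Finset.sum_const, hMcard]
          rfl
        · intro x hx y hy hxy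
          exact Finset.disjoint_of_subset_left Finset.inter_subset_right
            (Finset.disjoint_of_subset_right Finset.inter_subset_right (hdisj x hx y hy hxy))
      have h3 : b ∩ T = b :=
        Finset.eq_of_subset_of_card_le Finset.inter_subset_left
          (by rw [h2, uB b hb])
      exact Finset.inter_eq_left.mp h3
    have hBT : vertsH B ⊆ (↑T : Set V) := by
      intro v hv
      simp only [vertsH, Set.mem_iUnion, Finset.mem_coe] at hv
      obtain ⟨b, hb, hvb⟩ := hv
      exact hbT b hb hvb
    have hTA : (↑T : Set V) ⊆ vertsH A := by
      intro v hv
      simp only [Finset.mem_coe, hT, Finset.mem_biUnion, id] at hv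
      obtain ⟨e, he, hve⟩ := hv
      simp only [vertsH, Set.mem_iUnion, Finset.mem_coe]
      exact ⟨e, hM.1 he, hve⟩
    have hWT : vertsH A ∪ vertsH B = (↑T : Set V) := by
      apply Set.Subset.antisymm
      · exact Set.union_subset (fun v hv => hBT (hAB hv)) hBT
      · exact fun v hv => Or.inl (hTA hv)
    rw [hWT, Set.ncard_coe_finset, hTcard]
  -- (i) → (iii)
  have h13 : (vertsH A ∪ vertsH B).ncard = 9 →
      (∀ e ∈ A, ∀ f ∈ A, Disjoint e f →
        ∃ g ∈ A, (g : Set V) = (vertsH A ∪ vertsH B) \ ((e : Set V) ∪ (f : Set V))) := by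
    intro h9 e he f hf hef
    have hfin : (vertsH A ∪ vertsH B).Finite := by
      by_contra hinf
      have : (vertsH A ∪ vertsH B).ncard = 0 := Set.Infinite.ncard hinf
      omega
    set Wf := hfin.toFinset with hWf
    have hWcard : Wf.card = 9 := by
      rw [hWf]
      rw [Set.ncard_eq_toFinset_card (vertsH A ∪ vertsH B) hfin] at h9
      exact h9
    have hsubA : ∀ a ∈ A, a ⊆ Wf := by
      intro a ha x hx
      rw [hWf, Set.Finite.mem_toFinset]
      left
      simp only [vertsH, Set.mem_iUnion, Finset.mem_coe]
      exact ⟨a, ha, hx⟩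
    have hsubB : ∀ b ∈ B, b ⊆ Wf := by
      intro b hb x hx
      rw [hWf, Set.Finite.mem_toFinset]
      right
      simp only [vertsH, Set.mem_iUnion, Finset.mem_coe]
      exact ⟨b, hb, hx⟩
    have hefW : e ∪ f ⊆ Wf := Finset.union_subset (hsubA e he) (hsubA f hf)
    have hefcard : (e ∪ f).card = 6 := by
      rw [Finset.card_union_of_disjoint hef, uA e he, uA f hf]
    refine ⟨Wf \ (e ∪ f), ?_, ?_⟩
    · rw [hA]
      constructor
      · rw [Finset.card_sdiff_of_subset hefW, hWcard, hefcard]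
      · intro b hb
        have hble : (b ∩ (e ∪ f)).card ≤ 2 := by
          have h1 : b ∩ (e ∪ f) = (b ∩ e) ∪ (b ∩ f) := Finset.inter_union_distrib_left b e f
          have h2 : (b ∩ e).card = 1 := by rw [Finset.inter_comm]; exact orth e he b hb
          have h3 : (b ∩ f).card = 1 := by rw [Finset.inter_comm]; exact orth f hf b hb
          calc (b ∩ (e ∪ f)).card ≤ (b ∩ e).card + (b ∩ f).card := by
                rw [h1]; exact Finset.card_union_le _ _
            _ ≤ 2 := by omega
        have hnsub : ¬ b ⊆ e ∪ f := by
          intro hsub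
          have : b ∩ (e ∪ f) = b := Finset.inter_eq_left.mpr hsub
          rw [this, uB b hb] at hble
          omega
        obtain ⟨x, hxb, hxef⟩ := Finset.not_subset.mp hnsub
        exact ⟨x, Finset.mem_inter.mpr ⟨Finset.mem_sdiff.mpr ⟨hsubB b hb hxb, hxef⟩, hxb⟩⟩
    · rw [Finset.coe_sdiff, Finset.coe_union, Set.Finite.coe_toFinset]
  -- (iii) → (ii)
  have h32 : (∀ e ∈ A, ∀ f ∈ A, Disjoint e f →
        ∃ g ∈ A, (g : Set V) = (vertsH A ∪ vertsH B) \ ((e : Set V) ∪ (f : Set V))) →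
      MatchNumIs A 3 := by
    intro hc
    obtain ⟨e, he, f, hf, hef⟩ := hdis
    obtain ⟨g, hg, hgeq⟩ := hc e he f hf hef
    have hge : Disjoint g e := by
      rw [Finset.disjoint_left]
      intro x hxg hxe
      have hx : (x : V) ∈ (↑g : Set V) := hxg
      rw [hgeq] at hx
      exact hx.2 (Or.inl hxe)
    have hgf : Disjoint g f := by
      rw [Finset.disjoint_left]
      intro x hxg hxf
      have hx : (x : V) ∈ (↑g : Set V) := hxg
      rw [hgeq] at hx
      exact hx.2 (Or.inr hxf)
    have keyd : ∀ s : Finset V, s.Nonempty → ¬ Disjoint s s := by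
      intro s hs hd
      exact hs.ne_empty (by simpa using disjoint_self.mp hd)
    have hene : e.Nonempty := Finset.card_pos.mp (by rw [uA e he]; omega)
    have hgne : g.Nonempty := Finset.card_pos.mp (by rw [uA g hg]; omega)
    have hef' : e ≠ f := by
      rintro rfl
      exact keyd e hene hef
    have hge' : g ≠ e := by
      rintro rfl
      exact keyd g hgne hge
    have hgf' : g ≠ f := by
      rintro rfl
      exact keyd g hgne hgf
    refine ⟨⟨{e, f, g}, ⟨?_, ?_⟩, ?_⟩, hub⟩
    · intro x hx
      simp only [Finset.coe_insert, Set.mem_insert_iff, Finset.coe_singleton,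
        Set.mem_singleton_iff] at hx
      rcases hx with rfl | rfl | rfl <;> assumption
    · intro x hx y hy hne
      simp only [Finset.coe_insert, Set.mem_insert_iff, Finset.coe_singleton,
        Set.mem_singleton_iff] at hx hy
      rcases hx with rfl | rfl | rfl <;> rcases hy with rfl | rfl | rfl <;>
        first
          | exact absurd rfl hne
          | exact hef
          | exact hef.symm
          | exact hge
          | exact hge.symm
          | exact hgf
          | exact hgf.symm
    · rw [Finset.card_insert_of_notMem, Finset.card_insert_of_notMem, Finset.card_singleton]
      · simp only [Finset.mem_singleton]
        exact fun h => hgf' h.symm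
      · simp only [Finset.mem_insert, Finset.mem_singleton]
        rintro (h | h)
        · exact hef' h
        · exact hge' h.symm
  exact ⟨⟨fun h => h32 (h13 h), h21⟩, ⟨fun h => h13 (h21 h), h32⟩,
    ⟨h13, fun h => h21 (h32 h)⟩⟩
end
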